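/- arXiv:1903.05629 — 9 statements merged into one kernel-verified Lean document; each statement's English description precedes it below -/
import Mathlib

section
/- Let ℓ ≥ 1 and let 0 ≤ u_1 < u_2 < ⋯ < u_ℓ and 0 < x_1 < x_2 < ⋯ < x_ℓ be real numbers. Then the generalized Vandermonde determinant det( (x_i^{u_j})_{1 ≤ i,j ≤ ℓ} ) is strictly positive. -/
open Matrix Finset Filter

lemma no_kill : ∀ (n : ℕ) (v : Fin n → ℝ), StrictMono v → ∀ (c : Fin n → ℝ)
    (s : Fin n → ℝ), (∀ i, 0 < s i) → StrictMono s →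
    (∀ i, ∑ j, c j * s i ^ v j = 0) → c = 0 := by
  intro n
  induction n with
  | zero => intro v _ c s _ _ _; exact funext fun j => j.elim0
  | succ n ih =>
    intro v hv c s hs0 hs hz
    -- divide by t ^ v 0
    set g : ℝ → ℝ := fun t => ∑ j, c j * t ^ (v j - v 0) with hgdef
    have hg : ∀ i, g (s i) = 0 := by
      intro i
      have : g (s i) = (∑ j, c j * s i ^ v j) / s i ^ (v 0) := by
        rw [Finset.sum_div]
        refine Finset.sum_congr rfl fun j _ => ?_
        rw [Real.rpow_sub (hs0 i)]
        ring
      rw [this, hz i, zero_div]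
    set g' : ℝ → ℝ := fun t => ∑ j, c j * ((v j - v 0) * t ^ (v j - v 0 - 1)) with hg'def
    have hderiv : ∀ t : ℝ, 0 < t → HasDerivAt g (g' t) t := by
      intro t ht
      apply HasDerivAt.fun_sum
      intro j _
      exact (Real.hasDerivAt_rpow_const (Or.inl ht.ne')).const_mul (c j)
    have hroots : ∀ i : Fin n, ∃ y, s i.castSucc < y ∧ y < s i.succ ∧ g' y = 0 := by
      intro i
      have hlt : s i.castSucc < s i.succ := hs Fin.castSucc_lt_succ
      have hcont : ContinuousOn g (Set.Icc (s i.castSucc) (s i.succ)) := by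
        intro t ht
        have ht0 : 0 < t := lt_of_lt_of_le (hs0 _) ht.1
        exact ((hderiv t ht0).continuousAt).continuousWithinAt
      obtain ⟨y, hy, hy0⟩ := exists_hasDerivAt_eq_zero hlt hcont ((hg _).trans (hg _).symm)
        (fun t ht => hderiv t (lt_trans (hs0 _) ht.1))
      exact ⟨y, hy.1, hy.2, hy0⟩
    choose y hy1 hy2 hy0 using hroots
    have hy0' : ∀ i, 0 < y i := fun i => lt_trans (hs0 _) (hy1 i)
    have hymono : StrictMono y := by
      intro i k hik
      calc y i < s i.succ := hy2 i
        _ ≤ s k.castSucc := hs.monotone (by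
            simp [Fin.succ_le_castSucc_iff, hik])
        _ < y k := hy1 k
    have hsub : (fun j : Fin n => c j.succ * (v j.succ - v 0)) = 0 := by
      apply ih (fun j => v j.succ - v 0 - 1)
        (fun a b hab => by
          have := hv (Fin.succ_lt_succ_iff.mpr hab)
          dsimp only
          linarith)
        _ y hy0' hymono
      intro i
      have h0 : ∑ j, c j * ((v j - v 0) * y i ^ (v j - v 0 - 1)) = 0 := hy0 i
      rw [Fin.sum_univ_succ] at h0
      simpa [mul_assoc] using h0
    have hsucc : ∀ j : Fin n, c j.succ = 0 := by
      intro j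
      have h1 := congrFun hsub j
      have h2 : v 0 < v j.succ := hv (Fin.succ_pos j)
      simp only [Pi.zero_apply] at h1
      rcases mul_eq_zero.mp h1 with h | h
      · exact h
      · linarith
    funext j
    refine Fin.cases ?_ (fun j => hsucc j) j
    have h0 := hz 0
    rw [Fin.sum_univ_succ] at h0
    simp only [hsucc, zero_mul, Finset.sum_const_zero, add_zero] at h0
    have := Real.rpow_pos_of_pos (hs0 0) (v 0)
    rcases mul_eq_zero.mp h0 with h | h
    · exact h
    · exact absurd h this.ne'

lemma gvdm_pos : ∀ (ℓ : ℕ) (u x : Fin ℓ → ℝ), StrictMono u → (∀ i, 0 < x i) →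
    StrictMono x → 0 < Matrix.det (Matrix.of fun i j : Fin ℓ => x i ^ u j) := by
  intro ℓ
  induction ℓ with
  | zero => intro u x _ _ _; simp [Matrix.det_fin_zero]
  | succ ℓ ih =>
    intro u x hu hx0 hx
    set c : Fin (ℓ + 1) → ℝ := fun j =>
      (-1 : ℝ) ^ (ℓ + (j : ℕ)) *
        Matrix.det (Matrix.of fun i' k' : Fin ℓ => x i'.castSucc ^ u (j.succAbove k')) with hc
    -- determinant with last row replaced by powers of `t`
    have hdet : ∀ t : ℝ,
        Matrix.det (Matrix.of fun i j : Fin (ℓ + 1) =>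
          (if i = Fin.last ℓ then t else x i) ^ u j) = ∑ j, c j * t ^ u j := by
      intro t
      rw [Matrix.det_succ_row _ (Fin.last ℓ)]
      refine Finset.sum_congr rfl fun j _ => ?_
      have h1 : ((Matrix.of fun i j : Fin (ℓ + 1) => (if i = Fin.last ℓ then t else x i) ^ u j).submatrix
          (Fin.last ℓ).succAbove j.succAbove) =
          Matrix.of fun i' k' : Fin ℓ => x i'.castSucc ^ u (j.succAbove k') := by
        ext i' k'
        simp [Fin.succAbove_last, (Fin.castSucc_lt_last i').ne]
      rw [h1]
      simp only [Matrix.of_apply, if_pos rfl, hc, Fin.val_last, if_true]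
      ring
    -- the leading coefficient is positive
    have hclast : 0 < c (Fin.last ℓ) := by
      have h2 : 0 < Matrix.det (Matrix.of fun i' k' : Fin ℓ =>
          x i'.castSucc ^ u ((Fin.last ℓ).succAbove k')) := by
        have := ih (fun k => u k.castSucc) (fun i => x i.castSucc)
          (fun a b hab => hu (Fin.strictMono_castSucc hab))
          (fun i => hx0 _) (fun a b hab => hx (Fin.strictMono_castSucc hab))
        simpa [Fin.succAbove_last] using this
      have h3 : (-1 : ℝ) ^ (ℓ + (Fin.last ℓ : ℕ)) = 1 := by
        simp only [Fin.val_last]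
        exact Even.neg_one_pow ⟨ℓ, rfl⟩
      rw [hc]
      simp only [h3, one_mul]
      exact h2
    -- the first ℓ points are zeros
    have hzero : ∀ i : Fin ℓ, ∑ j, c j * x i.castSucc ^ u j = 0 := by
      intro i
      rw [← hdet]
      refine Matrix.det_zero_of_row_eq (Fin.castSucc_lt_last i).ne ?_
      funext j
      simp [(Fin.castSucc_lt_last i).ne]
    -- eventual positivity at infinity
    have hlim : Filter.Tendsto (fun t => ∑ j, c j * t ^ (u j - u (Fin.last ℓ)))
        Filter.atTop (nhds (c (Fin.last ℓ))) := by
      have h4 : Filter.Tendsto (fun t => ∑ j, c j * t ^ (u j - u (Fin.last ℓ)))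
          Filter.atTop (nhds (∑ j, if j = Fin.last ℓ then c (Fin.last ℓ) else 0)) := by
        refine tendsto_finset_sum _ fun j _ => ?_
        by_cases hj : j = Fin.last ℓ
        · subst hj
          simp only [sub_self, if_pos rfl]
          simp [Real.rpow_zero]
        · have hjlt : u j < u (Fin.last ℓ) := hu (Fin.lt_last_iff_ne_last.mpr hj)
          have h5 := (tendsto_rpow_neg_atTop (y := u (Fin.last ℓ) - u j) (by linarith)).const_mul (c j)
          simp only [mul_zero, neg_sub] at h5
          simpa [hj] using h5
      simpa using h4
    have hev := (hlim.eventually (eventually_gt_nhds hclast)).and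
      (Filter.eventually_gt_atTop (x (Fin.last ℓ)))
    obtain ⟨T, hT2, hT1⟩ := hev.exists
    have hT0 : 0 < T := lt_trans (hx0 _) hT1
    have hfT : 0 < ∑ j, c j * T ^ u j := by
      have h6 : ∑ j, c j * T ^ u j = T ^ u (Fin.last ℓ) * ∑ j, c j * T ^ (u j - u (Fin.last ℓ)) := by
        rw [Finset.mul_sum]
        refine Finset.sum_congr rfl fun j _ => ?_
        rw [Real.rpow_sub hT0]
        field_simp [(Real.rpow_pos_of_pos hT0 (u (Fin.last ℓ))).ne']
      rw [h6]
      exact mul_pos (Real.rpow_pos_of_pos hT0 _) hT2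
    -- continuity for IVT
    have hcont : ContinuousOn (fun t => ∑ j, c j * t ^ u j)
        (Set.Icc (x (Fin.last ℓ)) T) := by
      intro t ht
      have ht0 : 0 < t := lt_of_lt_of_le (hx0 _) ht.1
      refine ContinuousAt.continuousWithinAt ?_
      have : HasDerivAt (fun t => ∑ j, c j * t ^ u j)
          (∑ j, c j * (u j * t ^ (u j - 1))) t := by
        apply HasDerivAt.fun_sum
        intro j _
        exact (Real.hasDerivAt_rpow_const (Or.inl ht0.ne')).const_mul (c j)
      exact this.continuousAt
    -- the goal determinant equals the sum at `x (last)`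
    have hgoal : Matrix.det (Matrix.of fun i j : Fin (ℓ + 1) => x i ^ u j)
        = ∑ j, c j * x (Fin.last ℓ) ^ u j := by
      rw [← hdet]
      congr 1
      ext i j
      by_cases h : i = Fin.last ℓ <;> simp [h]
    rw [hgoal]
    by_contra hcon
    push_neg at hcon
    -- extract a zero `z ≥ x (last)`
    have hzex : ∃ z, x (Fin.last ℓ) ≤ z ∧ ∑ j, c j * z ^ u j = 0 := by
      rcases eq_or_lt_of_le hcon with heq | hlt
      · exact ⟨x (Fin.last ℓ), le_refl _, heq⟩
      · have h0mem : (0 : ℝ) ∈ Set.Ioo (∑ j, c j * x (Fin.last ℓ) ^ u j) (∑ j, c j * T ^ u j) :=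
          ⟨hlt, hfT⟩
        obtain ⟨z, hzmem, hz⟩ := intermediate_value_Ioo (le_of_lt hT1) hcont h0mem
        exact ⟨z, le_of_lt hzmem.1, hz⟩
    obtain ⟨z, hzge, hz⟩ := hzex
    set s : Fin (ℓ + 1) → ℝ := fun i => if i = Fin.last ℓ then z else x i with hs
    have hs0 : ∀ i, 0 < s i := by
      intro i
      by_cases h : i = Fin.last ℓ
      · simp only [hs, if_pos h]; exact lt_of_lt_of_le (hx0 _) hzge
      · simp only [hs, if_neg h]; exact hx0 i
    have hsm : StrictMono s := by
      intro i k hik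
      have hine : i ≠ Fin.last ℓ := by
        intro h; subst h
        exact absurd hik (not_lt.mpr (Fin.le_last k))
      by_cases hk : k = Fin.last ℓ
      · subst hk
        simp only [hs, if_neg hine, if_pos rfl]
        exact lt_of_lt_of_le (hx (Fin.lt_last_iff_ne_last.mpr hine)) hzge
      · simp only [hs, if_neg hine, if_neg hk]
        exact hx hik
    have hzall : ∀ i, ∑ j, c j * s i ^ u j = 0 := by
      intro i
      by_cases h : i = Fin.last ℓ
      · subst h; simpa [hs] using hz
      · have := hzero (i.castPred h)
        rw [Fin.castSucc_castPred] at this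
        simpa [hs, h] using this
    have := no_kill (ℓ + 1) u hu c s hs0 hsm hzall
    rw [this] at hclast
    simp at hclast

/-- The generalized Vandermonde determinant `det((x_i^{u_j}))` with
`0 ≤ u_1 < ⋯ < u_ℓ` and `0 < x_1 < ⋯ < x_ℓ` is strictly positive. -/
theorem stmt4 (ℓ : ℕ) (hℓ : 1 ≤ ℓ) (u x : Fin ℓ → ℝ)
    (hu0 : ∀ i, 0 ≤ u i) (hu : StrictMono u)
    (hx0 : ∀ i, 0 < x i) (hx : StrictMono x) :
    0 < Matrix.det (Matrix.of fun i j : Fin ℓ => x i ^ u j) :=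
  gvdm_pos ℓ u x hu hx0 hx
end

section
/- Let λ ≥ 1 and m ≥ 0 be integers with 0 ≤ m ≤ 2λ - 1, and let F_{λ,m}(x) be the polynomial of minimal degree satisfying F_{λ,m}(j) = sgn(j)·j^m for every integer j ∈ {-λ,…,λ}. If m is even, then F_{λ,m} is an odd function of degree 2λ - 1 whose leading coefficient has sign (-1)^{(2λ-m-2)/2}; if m is odd, then F_{λ,m} is an even function of degree 2λ whose leading coefficient has sign (-1)^{(2λ-m-1)/2}. -/
open Polynomial Set

lemma card_le_natDeg (P : Polynomial ℝ) (hP : P ≠ 0) (s : Finset ℝ)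
    (h : ∀ x ∈ s, P.eval x = 0) : s.card ≤ P.natDegree := by
  have hsub : s ⊆ P.roots.toFinset := by
    intro x hx
    rw [Multiset.mem_toFinset, mem_roots hP]
    exact h x hx
  calc s.card ≤ P.roots.toFinset.card := Finset.card_le_card hsub
    _ ≤ Multiset.card P.roots := Multiset.toFinset_card_le _
    _ ≤ P.natDegree := P.card_roots'

lemma eq_zero_of_many_roots (P : Polynomial ℝ) (n : ℕ) (hdeg : P.natDegree ≤ n)
    (s : Finset ℝ) (hcard : n < s.card) (h : ∀ x ∈ s, P.eval x = 0) : P = 0 := by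
  by_contra hP
  have := card_le_natDeg P hP s h
  omega

lemma rolle_finset (P : Polynomial ℝ) (s : Finset ℝ) (h : ∀ x ∈ s, P.eval x = 0) :
    ∃ t : Finset ℝ, t.card = s.card - 1 ∧
      ∀ y ∈ t, P.derivative.eval y = 0 ∧ ∃ a ∈ s, ∃ b ∈ s, a < y ∧ y < b := by
  induction s using Finset.strongInduction with
  | _ s ih =>
  by_cases hs : s.card ≤ 1
  · exact ⟨∅, by simp; omega, by simp⟩
  · have hne : s.Nonempty := Finset.card_pos.mp (by omega)
    set M := s.max' hne with hM
    have hMs : M ∈ s := s.max'_mem hne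
    set s' := s.erase M with hs'
    have hss : s' ⊂ s := Finset.erase_ssubset hMs
    have hs'c : s'.card = s.card - 1 := Finset.card_erase_of_mem hMs
    have hne' : s'.Nonempty := Finset.card_pos.mp (by omega)
    set M' := s'.max' hne' with hM'
    have hM's' : M' ∈ s' := s'.max'_mem hne'
    have hM's : M' ∈ s := Finset.mem_of_mem_erase hM's'
    have hlt : M' < M := lt_of_le_of_ne (s.le_max' _ hM's) (Finset.ne_of_mem_erase hM's')
    have hcont : ContinuousOn (fun x => P.eval x) (Icc M' M) :=
      (Polynomial.continuous P).continuousOn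
    obtain ⟨c, hc, hc0⟩ := exists_deriv_eq_zero hlt hcont (by rw [h M' hM's, h M hMs])
    have hc0' : P.derivative.eval c = 0 := by rw [← Polynomial.deriv]; exact hc0
    obtain ⟨t', ht'c, ht'⟩ := ih s' hss (fun x hx => h x (Finset.mem_of_mem_erase hx))
    have hcn : c ∉ t' := by
      intro hct
      obtain ⟨-, a, -, b, hb, -, hyb⟩ := ht' c hct
      have : b ≤ M' := s'.le_max' _ hb
      have : c < M' := lt_of_lt_of_le hyb this
      exact absurd hc.1 (by linarith)
    refine ⟨insert c t', ?_, ?_⟩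
    · rw [Finset.card_insert_of_notMem hcn, ht'c, hs'c]; omega
    · intro y hy
      rcases Finset.mem_insert.mp hy with rfl | hy'
      · exact ⟨hc0', M', hM's, M, hMs, hc.1, hc.2⟩
      · obtain ⟨h1, a, ha, b, hb, h2, h3⟩ := ht' y hy'
        exact ⟨h1, a, Finset.mem_of_mem_erase ha, b, Finset.mem_of_mem_erase hb, h2, h3⟩

lemma coeff_comp_neg_X (p : Polynomial ℝ) (n : ℕ) :
    (p.comp (-X)).coeff n = (-1)^n * p.coeff n := by
  induction p using Polynomial.induction_on' with
  | add f g hf hg => rw [add_comp, coeff_add, hf, hg, coeff_add]; ring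
  | monomial i a =>
    rw [monomial_comp, neg_pow, ← C_1, ← C_neg, ← C_pow, mul_left_comm, coeff_C_mul,
      coeff_C_mul, coeff_X_pow, coeff_monomial]
    by_cases hni : n = i
    · subst hni; simp
    · simp [hni, Ne.symm hni]

lemma eq_prod_of_card_roots (P : Polynomial ℝ) (hP : P ≠ 0) (s : Finset ℝ)
    (h : ∀ x ∈ s, P.eval x = 0) (hcard : s.card = P.natDegree) :
    P = C P.leadingCoeff * ∏ a ∈ s, (X - C a) := by
  have hmon : (∏ a ∈ s, (X - C a)).Monic := monic_prod_of_monic _ _ (fun a _ => monic_X_sub_C a)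
  have hdp : (∏ a ∈ s, (X - C a)).natDegree = s.card := by
    rw [natDegree_prod _ _ (fun a _ => X_sub_C_ne_zero a)]
    simp [natDegree_X_sub_C]
  set Q := C P.leadingCoeff * ∏ a ∈ s, (X - C a) with hQ
  have hlc : P.leadingCoeff ≠ 0 := leadingCoeff_ne_zero.mpr hP
  have hQdeg : Q.natDegree = P.natDegree := by
    rw [hQ, natDegree_C_mul hlc, hdp, hcard]
  have hQlead : Q.coeff P.natDegree = P.leadingCoeff := by
    rw [hQ, coeff_C_mul, ← hcard, ← hdp, hmon.coeff_natDegree, mul_one]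
  have hD : P - Q = 0 := by
    rcases Nat.eq_zero_or_pos P.natDegree with h0 | hpos
    · have hs0 : s = ∅ := Finset.card_eq_zero.mp (by omega)
      rw [hQ, hs0]
      simp only [Finset.prod_empty, mul_one]
      rw [Polynomial.leadingCoeff, h0, ← Polynomial.eq_C_of_natDegree_eq_zero h0]
      ring
    · apply eq_zero_of_many_roots _ (P.natDegree - 1) _ s (by omega)
      · intro x hx
        have hQx : Q.eval x = 0 := by
          rw [hQ, eval_mul]
          have : ∏ a ∈ s, (x - a) = 0 := Finset.prod_eq_zero hx (by ring)
          simp [eval_prod, this]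
        simp [h x hx, hQx]
      · rw [Polynomial.natDegree_le_iff_coeff_eq_zero]
        intro k hk
        have hk' : P.natDegree ≤ k := by omega
        rcases eq_or_lt_of_le hk' with rfl | hklt
        · rw [coeff_sub, hQlead, Polynomial.leadingCoeff, sub_self]
        · rw [coeff_sub, coeff_eq_zero_of_natDegree_lt hklt,
            coeff_eq_zero_of_natDegree_lt (by omega : Q.natDegree < k), sub_self]
  linear_combination (norm := ring_nf) hD

lemma poly_eq_of_eval_eq (l : ℕ) (F G : Polynomial ℝ) (hF : F.natDegree ≤ 2*l)
    (hG : G.natDegree ≤ 2*l) (h : ∀ j : ℤ, |j| ≤ (l:ℤ) → F.eval (j:ℝ) = G.eval (j:ℝ)) :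
    F = G := by
  have hD : F - G = 0 := by
    apply eq_zero_of_many_roots _ (2*l) _ ((Finset.Icc (-(l:ℤ)) l).image (Int.cast : ℤ → ℝ))
    · rw [Finset.card_image_of_injective _ Int.cast_injective, Int.card_Icc]
      omega
    · intro x hx
      obtain ⟨j, hj, rfl⟩ := Finset.mem_image.mp hx
      rw [Finset.mem_Icc] at hj
      rw [eval_sub, h j (abs_le.mpr hj), sub_self]
    · exact le_trans (natDegree_sub_le F G) (by omega)
  linear_combination (norm := ring_nf) hD

lemma iterate_derivative_comp_neg_X (F : Polynomial ℝ) (e : ℝ) (hF : F.comp (-X) = C e * F)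
    (j : ℕ) : ((Polynomial.derivative)^[j] F).comp (-X) = C ((-1)^j * e) * (Polynomial.derivative)^[j] F := by
  induction j with
  | zero => simpa using hF
  | succ n ih =>
    rw [Function.iterate_succ_apply']
    have := congrArg (Polynomial.derivative) ih
    rw [derivative_comp, derivative_mul, derivative_C, zero_mul, zero_add] at this
    have hd : Polynomial.derivative (-X : Polynomial ℝ) = -1 := by simp
    rw [hd] at this
    have : (Polynomial.derivative ((Polynomial.derivative)^[n] F)).comp (-X)
        = - (C ((-1)^n * e) * Polynomial.derivative ((Polynomial.derivative)^[n] F)) := by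
      have h2 := this
      calc (Polynomial.derivative ((Polynomial.derivative)^[n] F)).comp (-X)
          = - (-1 * (Polynomial.derivative ((Polynomial.derivative)^[n] F)).comp (-X)) := by ring
        _ = - (C ((-1)^n * e) * Polynomial.derivative ((Polynomial.derivative)^[n] F)) := by
            rw [h2]
    rw [this, pow_succ]
    rw [show C ((-1 : ℝ)^n * -1 * e) = - C ((-1)^n * e) by rw [← C_neg]; ring_nf]
    ring

set_option maxHeartbeats 2000000 in
lemma core_odd (l r : ℕ) (hl : 1 ≤ l) (hr : r < l) (F : Polynomial ℝ)
    (hdeg : F.natDegree ≤ 2*l)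
    (hF : ∀ j : ℤ, |j| ≤ (l:ℤ) → F.eval (j:ℝ) = (Int.sign j : ℝ) * (j:ℝ)^(2*r+1)) :
    (∀ x : ℝ, F.eval (-x) = F.eval x) ∧ F.natDegree = 2*l ∧
      0 < (-1:ℝ)^(l - r - 1) * F.leadingCoeff := by
  set m := 2*r+1 with hm
  have hmle : m ≤ 2*l - 1 := by omega
  -- evenness
  have hcompdeg : (F.comp (-X)).natDegree ≤ 2*l := by
    rw [natDegree_comp]
    simp only [natDegree_neg, natDegree_X, mul_one]
    exact hdeg
  have hcomp : F.comp (-X) = C 1 * F := by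
    rw [C_1, one_mul]
    apply poly_eq_of_eval_eq l _ _ hcompdeg hdeg
    intro j hj
    have hj' : |(-j)| ≤ (l:ℤ) := by rwa [abs_neg]
    rw [eval_comp]
    simp only [eval_neg, eval_X]
    rw [show -((j:ℤ):ℝ) = ((-j : ℤ):ℝ) by push_cast; ring, hF _ hj', hF _ hj, Int.sign_neg]
    push_cast
    rw [Odd.neg_pow ⟨r, by ring⟩]
    ring
  have heven : ∀ x : ℝ, F.eval (-x) = F.eval x := by
    intro x
    have h1 := congrArg (eval x) hcomp
    rwa [eval_comp, eval_neg, eval_X, C_1, one_mul] at h1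
  -- parity of iterated derivatives
  have hpar := iterate_derivative_comp_neg_X F 1 hcomp
  have hG0 : ∀ j : ℕ, Odd j → ((Polynomial.derivative)^[j] F).eval 0 = 0 := by
    intro j hj
    have h1 := congrArg (eval 0) (hpar j)
    rw [eval_comp, eval_neg, eval_X, neg_zero, eval_mul, eval_C, Odd.neg_one_pow hj] at h1
    have : (2 : ℝ) * ((Polynomial.derivative)^[j] F).eval 0 = 0 := by linarith
    linarith
  -- the auxiliary polynomial A = F - X^m
  set A : Polynomial ℝ := F - X^m with hA
  have hA0 : ∀ j : ℕ, Odd j → j < m → ((Polynomial.derivative)^[j] A).eval 0 = 0 := by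
    intro j hj hjm
    rw [hA, iterate_derivative_sub, eval_sub, hG0 j hj,
      iterate_derivative_X_pow_eq_natCast_mul]
    simp [zero_pow (show m - j ≠ 0 by omega)]
  -- base roots of A : 0,1,...,l
  have hbase : ∀ k : ℕ, k ≤ l → A.eval (k:ℝ) = 0 := by
    intro k hk
    have habs : |(k:ℤ)| ≤ (l:ℤ) := by
      rw [abs_of_nonneg (by positivity)]; exact_mod_cast hk
    have h1 := hF (k:ℤ) habs
    rw [show (((k:ℤ)):ℝ) = (k:ℝ) by push_cast; ring] at h1
    rw [hA, eval_sub, eval_pow, eval_X, h1]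
    rcases Nat.eq_zero_or_pos k with rfl | hkpos
    · simp [zero_pow (show m ≠ 0 by omega)]
    · rw [Int.sign_eq_one_of_pos (by exact_mod_cast hkpos)]
      push_cast; ring
  -- the Rolle chain
  have chain : ∀ i : ℕ, i ≤ r → ∃ s : Finset ℝ, s.card = l + 1 - i ∧
      ∀ x ∈ s, 0 ≤ x ∧ ((Polynomial.derivative)^[2*i] A).eval x = 0 := by
    intro i
    induction i with
    | zero =>
      intro _
      refine ⟨(Finset.range (l+1)).image (Nat.cast : ℕ → ℝ), ?_, ?_⟩
      · rw [Finset.card_image_of_injective _ Nat.cast_injective, Finset.card_range]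
        omega
      · intro x hx
        obtain ⟨k, hk, rfl⟩ := Finset.mem_image.mp hx
        rw [Finset.mem_range] at hk
        exact ⟨by positivity, by simpa using hbase k (by omega)⟩
    | succ n ih =>
      intro hn
      obtain ⟨s, hsc, hs⟩ := ih (by omega)
      obtain ⟨t, htc, ht⟩ := rolle_finset _ s (fun x hx => (hs x hx).2)
      have htpos : ∀ y ∈ t, 0 < y := by
        intro y hy
        obtain ⟨-, a, ha, -, -, hay, -⟩ := ht y hy
        exact lt_of_le_of_lt (hs a ha).1 hay
      have ht0 : (0:ℝ) ∉ t := fun h0 => absurd (htpos 0 h0) (lt_irrefl 0)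
      have hoddroot : ((Polynomial.derivative)^[2*n+1] A).eval 0 = 0 :=
        hA0 (2*n+1) ⟨n, by ring⟩ (by omega)
      set s1 : Finset ℝ := insert (0:ℝ) t with hs1
      have hs1c : s1.card = l + 1 - n := by
        rw [hs1, Finset.card_insert_of_notMem ht0, htc, hsc]; omega
      have hs1r : ∀ x ∈ s1, 0 ≤ x ∧ ((Polynomial.derivative)^[2*n+1] A).eval x = 0 := by
        intro x hx
        rcases Finset.mem_insert.mp hx with rfl | hx'
        · exact ⟨le_refl 0, hoddroot⟩
        · refine ⟨(htpos x hx').le, ?_⟩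
          rw [Function.iterate_succ_apply']
          exact (ht x hx').1
      obtain ⟨t2, ht2c, ht2⟩ := rolle_finset _ s1 (fun x hx => (hs1r x hx).2)
      refine ⟨t2, by omega, ?_⟩
      intro x hx
      obtain ⟨hroot, a, ha, -, -, hay, -⟩ := ht2 x hx
      refine ⟨le_of_lt (lt_of_le_of_lt (hs1r a ha).1 hay), ?_⟩
      rw [show 2*(n+1) = (2*n+1)+1 by ring, Function.iterate_succ_apply']
      exact hroot
  -- A_m = G - C m!
  set G : Polynomial ℝ := (Polynomial.derivative)^[m] F with hG
  have hAm : (Polynomial.derivative)^[m] A = G - C ((m.factorial : ℝ)) := by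
    rw [hA, iterate_derivative_sub, iterate_derivative_X_pow_eq_natCast_mul,
      Nat.sub_self, pow_zero, mul_one, Nat.descFactorial_self, C_eq_natCast]
  set Q : Polynomial ℝ := G - C ((m.factorial : ℝ)) with hQdef
  have hG00 : G.eval 0 = 0 := hG0 m ⟨r, by omega⟩
  have hfacpos : (0:ℝ) < (m.factorial : ℝ) := by exact_mod_cast m.factorial_pos
  have hQne : Q ≠ 0 := by
    intro h0
    have h1 := congrArg (eval 0) h0
    rw [hQdef, eval_sub, eval_C, hG00, eval_zero] at h1
    linarith
  -- final Rolle step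
  obtain ⟨sr, hsrc, hsr⟩ := chain r (le_refl r)
  obtain ⟨sm, hsmc, hsm⟩ := rolle_finset _ sr (fun x hx => (hsr x hx).2)
  have hsmc' : sm.card = l - r := by omega
  have hiterm : (Polynomial.derivative)^[m] A
      = Polynomial.derivative ((Polynomial.derivative)^[2*r] A) := by
    rw [hm, Function.iterate_succ_apply']
  have hsmroot : ∀ y ∈ sm, 0 < y ∧ Q.eval y = 0 := by
    intro y hy
    obtain ⟨hroot, a, ha, -, -, hay, -⟩ := hsm y hy
    refine ⟨lt_of_le_of_lt (hsr a ha).1 hay, ?_⟩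
    rw [← hAm, hiterm]
    exact hroot
  -- G' facts
  set G' : Polynomial ℝ := Polynomial.derivative G with hG'
  have hsmne : sm.Nonempty := Finset.card_pos.mp (by omega)
  have hG'ne : G' ≠ 0 := by
    intro h0
    have hdeg0 : G.natDegree = 0 := natDegree_eq_zero_of_derivative_eq_zero h0
    have hGC : G = C (G.coeff 0) := Polynomial.eq_C_of_natDegree_eq_zero hdeg0
    have hGc0 : G.coeff 0 = 0 := by
      have := hG00
      rwa [hGC, eval_C] at this
    obtain ⟨y, hy⟩ := hsmne
    have := (hsmroot y hy).2
    rw [hQdef, eval_sub, eval_C, hGC, hGc0, C_0, eval_zero] at this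
    linarith
  -- R = all positive roots of Q
  set R : Finset ℝ := Q.roots.toFinset.filter (fun x => 0 < x) with hR
  have hRroot : ∀ x ∈ R, 0 < x ∧ Q.eval x = 0 := by
    intro x hx
    rw [hR, Finset.mem_filter, Multiset.mem_toFinset, mem_roots hQne] at hx
    exact ⟨hx.2, hx.1⟩
  have hsmR : sm ⊆ R := by
    intro y hy
    rw [hR, Finset.mem_filter, Multiset.mem_toFinset, mem_roots hQne]
    exact ⟨(hsmroot y hy).2, (hsmroot y hy).1⟩
  have hRcard : l - r ≤ R.card := hsmc' ▸ Finset.card_le_card hsmR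
  obtain ⟨t, htc, ht⟩ := rolle_finset Q R (fun x hx => (hRroot x hx).2)
  have hQder : Q.derivative = G' := by
    rw [hQdef, derivative_sub, derivative_C, sub_zero]
  -- T = all positive roots of G'
  set T : Finset ℝ := G'.roots.toFinset.filter (fun x => 0 < x) with hT
  have hTroot : ∀ x ∈ T, 0 < x ∧ G'.eval x = 0 := by
    intro x hx
    rw [hT, Finset.mem_filter, Multiset.mem_toFinset, mem_roots hG'ne] at hx
    exact ⟨hx.2, hx.1⟩
  have htT : t ⊆ T := by
    intro y hy
    obtain ⟨hroot, a, ha, -, -, hay, -⟩ := ht y hy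
    rw [hT, Finset.mem_filter, Multiset.mem_toFinset, mem_roots hG'ne]
    rw [hQder] at hroot
    exact ⟨hroot, lt_of_le_of_lt (hRroot a ha).1.le hay⟩
  -- symmetric root set of G'
  set negT : Finset ℝ := T.image (fun x => -x) with hnegT
  have hdisj : Disjoint T negT := by
    rw [Finset.disjoint_left]
    intro x hx hx'
    obtain ⟨y, hy, hyx⟩ := Finset.mem_image.mp hx'
    have h1 := (hTroot x hx).1
    have h2 := (hTroot y hy).1
    linarith [hyx ▸ (by linarith : -y < 0)]
  have hG'even : G'.comp (-X) = G' := by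
    have h1 := hpar (m+1)
    have h2 : G' = (Polynomial.derivative)^[m+1] F := by
      rw [hG', hG]
      exact (Function.iterate_succ_apply' _ m F).symm
    rw [← h2] at h1
    rw [h1, Even.neg_one_pow ⟨r+1, by omega⟩, mul_one, C_1, one_mul]
  have hu : ∀ x ∈ T ∪ negT, G'.eval x = 0 := by
    intro x hx
    rcases Finset.mem_union.mp hx with hx' | hx'
    · exact (hTroot x hx').2
    · obtain ⟨y, hy, rfl⟩ := Finset.mem_image.mp hx'
      have h1 := congrArg (eval y) hG'even
      rw [eval_comp, eval_neg, eval_X] at h1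
      rw [h1]
      exact (hTroot y hy).2
  have hucard : (T ∪ negT).card = 2 * T.card := by
    rw [Finset.card_union_of_disjoint hdisj, hnegT,
      Finset.card_image_of_injective _ neg_injective]
    ring
  have hG'iter : G' = (Polynomial.derivative)^[m+1] F := by
    rw [hG', hG]
    exact (Function.iterate_succ_apply' _ m F).symm
  have hnd : G'.natDegree ≤ 2*l - (m+1) := by
    rw [hG'iter]
    exact le_trans (natDegree_iterate_derivative F (m+1)) (Nat.sub_le_sub_right hdeg _)
  have hG'le := card_le_natDeg G' hG'ne (T ∪ negT) hu
  have hTcard : T.card ≤ l - r - 1 := by omega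
  have htT' : t.card ≤ T.card := Finset.card_le_card htT
  have hRc : R.card = l - r := by omega
  have htTeq : t = T := Finset.eq_of_subset_of_card_le htT (by omega)
  have hTc : T.card = l - r - 1 := by omega
  have hG'deg : G'.natDegree = 2*(l - r - 1) := by omega
  -- 0 is not a root of G'
  have h0nu : (0:ℝ) ∉ T ∪ negT := by
    intro h0
    rcases Finset.mem_union.mp h0 with h' | h'
    · exact absurd ((hTroot 0 h').1) (lt_irrefl 0)
    · obtain ⟨y, hy, hyx⟩ := Finset.mem_image.mp h'
      have := (hTroot y hy).1
      linarith [hyx]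
  have hG'0ne : G'.eval 0 ≠ 0 := by
    intro h0
    have hall : ∀ x ∈ insert (0:ℝ) (T ∪ negT), G'.eval x = 0 := by
      intro x hx
      rcases Finset.mem_insert.mp hx with rfl | hx'
      · exact h0
      · exact hu x hx'
    have := card_le_natDeg G' hG'ne _ hall
    rw [Finset.card_insert_of_notMem h0nu] at this
    omega
  -- minimum positive root of Q
  have hRne : R.Nonempty := Finset.card_pos.mp (by omega)
  set x1 := R.min' hRne with hx1
  have hx1R : x1 ∈ R := R.min'_mem hRne
  have hx1pos : 0 < x1 := (hRroot x1 hx1R).1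
  have hGx1 : G.eval x1 = (m.factorial : ℝ) := by
    have h1 := (hRroot x1 hx1R).2
    rw [hQdef, eval_sub, eval_C] at h1
    linarith
  -- no roots of G' in (0, x1]
  have hnoroot : ∀ z : ℝ, 0 < z → z ≤ x1 → G'.eval z ≠ 0 := by
    intro z hz0 hzx h0
    have hzT : z ∈ T := by
      rw [hT, Finset.mem_filter, Multiset.mem_toFinset, mem_roots hG'ne]
      exact ⟨h0, hz0⟩
    rw [← htTeq] at hzT
    obtain ⟨-, a, ha, -, -, haz, -⟩ := ht z hzT
    have := R.min'_le a ha
    rw [← hx1] at this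
    linarith
  -- mean value theorem
  obtain ⟨xi, hxi, hxival⟩ := exists_deriv_eq_slope (fun x => G.eval x) hx1pos
    (Polynomial.continuous G).continuousOn
    ((Polynomial.differentiable G).differentiableOn)
  have hxipos : 0 < G'.eval xi := by
    have h1 : deriv (fun x => G.eval x) xi = eval xi (derivative G) := by
      rw [Polynomial.deriv]
    rw [← hG'] at h1
    rw [h1, hGx1, hG00, sub_zero, sub_zero] at hxival
    rw [hxival]
    positivity
  -- sign of G'(0)
  have hG'0pos : 0 < G'.eval 0 := by
    rcases lt_trichotomy (G'.eval 0) 0 with hneg | h00 | hpos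
    · exfalso
      have hmem : (0:ℝ) ∈ Ioo (G'.eval 0) (G'.eval xi) := ⟨hneg, hxipos⟩
      have hsub := intermediate_value_Ioo (le_of_lt hxi.1) (Polynomial.continuous G').continuousOn
      obtain ⟨z, hz, hzval⟩ := hsub hmem
      exact hnoroot z hz.1 (le_of_lt (lt_trans hz.2 hxi.2)) hzval
    · exact absurd h00 hG'0ne
    · exact hpos
  -- factorization of G'
  have hfac := eq_prod_of_card_roots G' hG'ne (T ∪ negT) hu (by omega)
  have hprodpos : (0:ℝ) < ∏ y ∈ T, y := Finset.prod_pos (fun y hy => (hTroot y hy).1)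
  have heval0 : G'.eval 0 = G'.leadingCoeff * ((-1:ℝ)^(l-r-1) * (∏ y ∈ T, y)^2) := by
    have h1 := congrArg (eval 0) hfac
    rw [eval_mul, eval_C, eval_prod] at h1
    have h2 : ∀ a : ℝ, (X - C a).eval (0:ℝ) = -a := by intro a; simp
    rw [h1]
    have h3 : ∏ a ∈ T ∪ negT, (X - C a).eval (0:ℝ) = ∏ a ∈ T ∪ negT, (-a) := by
      apply Finset.prod_congr rfl
      intro a _
      exact h2 a
    rw [h3, Finset.prod_union hdisj, hnegT, Finset.prod_image
      (fun a _ b _ h => neg_injective h)]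
    simp only [neg_neg]
    have hprodneg : ∏ a ∈ T, (-a) = (-1:ℝ)^(T.card) * ∏ a ∈ T, a := by
      rw [← Finset.prod_const (-1:ℝ), ← Finset.prod_mul_distrib]
      exact Finset.prod_congr rfl (fun a _ => by ring)
    rw [hprodneg, hTc]
    ring
  clear_value m A G Q G' R T negT x1
  -- sign of leading coefficient of G'
  have hp2 : (0:ℝ) < (∏ y ∈ T, y)^2 := by positivity
  have hsignG' : 0 < (-1:ℝ)^(l-r-1) * G'.leadingCoeff := by
    rcases neg_one_pow_eq_or ℝ (l-r-1) with he | he <;> rw [he] at heval0 ⊢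
    · have h2 : 0 < G'.leadingCoeff * (∏ y ∈ T, y)^2 := by
        rw [one_mul] at heval0; linarith
      rcases mul_pos_iff.mp h2 with ⟨h3, -⟩ | ⟨-, h4⟩
      · linarith
      · linarith
    · have h1 : (-G'.leadingCoeff) * (∏ y ∈ T, y)^2 = G'.eval 0 := by
        rw [heval0]; ring
      have h2 : 0 < (-G'.leadingCoeff) * (∏ y ∈ T, y)^2 := by linarith
      rcases mul_pos_iff.mp h2 with ⟨h3, -⟩ | ⟨-, h4⟩
      · linarith
      · linarith
  -- degrees
  have hndG : G.natDegree ≤ 2*l - m := by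
    rw [hG]
    exact le_trans (natDegree_iterate_derivative F m) (Nat.sub_le_sub_right hdeg _)
  have hndG1 : 1 ≤ G.natDegree := by
    by_contra h0
    have hdeg0 : G.natDegree = 0 := by omega
    have : G' = 0 := by
      rw [hG']
      exact derivative_of_natDegree_zero hdeg0
    exact hG'ne this
  have hderle : G'.natDegree ≤ G.natDegree - 1 := hG' ▸ natDegree_derivative_le G
  have hdegG : G.natDegree = 2*l - m := by omega
  have hFdeg : F.natDegree = 2*l := by
    have h1 : G.natDegree ≤ F.natDegree - m := hG ▸ natDegree_iterate_derivative F m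
    omega
  -- leading coefficient chain
  have hdegj : ∀ j : ℕ, j ≤ m → ((Polynomial.derivative)^[j] F).natDegree = 2*l - j := by
    intro j hj
    have hup : ((Polynomial.derivative)^[j] F).natDegree ≤ 2*l - j :=
      le_trans (natDegree_iterate_derivative F j) (Nat.sub_le_sub_right hdeg _)
    have hGeq : G = (Polynomial.derivative)^[m-j] ((Polynomial.derivative)^[j] F) := by
      rw [hG, ← Function.iterate_add_apply]
      congr 1
      omega
    have hlow : G.natDegree ≤ ((Polynomial.derivative)^[j] F).natDegree - (m-j) :=
      hGeq ▸ natDegree_iterate_derivative _ (m-j)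
    omega
  have hdegj' : ∀ j : ℕ, j ≤ m + 1 → ((Polynomial.derivative)^[j] F).natDegree = 2*l - j := by
    intro j hj
    rcases Nat.lt_or_ge j (m+1) with h' | h'
    · exact hdegj j (by omega)
    · have : j = m + 1 := by omega
      rw [this, ← hG'iter]
      omega
  have hchain : ∀ j : ℕ, j ≤ m + 1 → ∃ c : ℝ, 0 < c ∧
      ((Polynomial.derivative)^[j] F).leadingCoeff = c * F.leadingCoeff := by
    intro j
    induction j with
    | zero => intro _; exact ⟨1, one_pos, by simp⟩
    | succ n ih =>
      intro hn
      obtain ⟨c, hc, hcl⟩ := ih (by omega)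
      have hdn : ((Polynomial.derivative)^[n] F).natDegree = 2*l - n := hdegj' n (by omega)
      have hdn1 : ((Polynomial.derivative)^[n+1] F).natDegree = 2*l - (n+1) := hdegj' (n+1) hn
      have hlead : ((Polynomial.derivative)^[n+1] F).leadingCoeff
          = ((Polynomial.derivative)^[n] F).leadingCoeff * ((2*l - n : ℕ) : ℝ) := by
        have hidx : (2*l - (n+1)) + 1 = 2*l - n := by omega
        have hcast : ((2*l - (n+1) : ℕ) : ℝ) + 1 = ((2*l - n : ℕ) : ℝ) := by norm_cast
        calc ((Polynomial.derivative)^[n+1] F).leadingCoeff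
            = ((Polynomial.derivative)^[n+1] F).coeff (2*l - (n+1)) := by
              rw [Polynomial.leadingCoeff, hdn1]
          _ = ((Polynomial.derivative)^[n] F).coeff ((2*l - (n+1)) + 1)
              * (((2*l - (n+1) : ℕ):ℝ) + 1) := by
              rw [Function.iterate_succ_apply', coeff_derivative]
          _ = ((Polynomial.derivative)^[n] F).leadingCoeff * ((2*l - n : ℕ) : ℝ) := by
              rw [hidx, hcast, Polynomial.leadingCoeff, hdn]
      refine ⟨c * ((2*l - n : ℕ) : ℝ), ?_, ?_⟩
      · have : (0:ℝ) < ((2*l - n : ℕ) : ℝ) := by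
          have : 1 ≤ 2*l - n := by omega
          exact_mod_cast (by omega : 0 < 2*l - n)
        positivity
      · rw [hlead, hcl]; ring
  obtain ⟨c, hc, hcl⟩ := hchain (m+1) (le_refl _)
  rw [← hG'iter] at hcl
  have hfinal : 0 < (-1:ℝ)^(l - r - 1) * F.leadingCoeff := by
    rw [hcl] at hsignG'
    rcases neg_one_pow_eq_or ℝ (l-r-1) with he | he <;> rw [he] at hsignG' ⊢
    · have h2 : 0 < c * F.leadingCoeff := by linarith
      rcases mul_pos_iff.mp h2 with ⟨-, h3⟩ | ⟨h4, -⟩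
      · linarith
      · linarith
    · have h2 : c * F.leadingCoeff < 0 := by linarith
      rcases mul_neg_iff.mp h2 with ⟨-, h3⟩ | ⟨h4, -⟩
      · linarith
      · linarith
  exact ⟨heven, hFdeg, hfinal⟩

/-- Lemma on the sign-interpolation polynomial `F_{λ,m}`: if `F` is the (unique) polynomial of
degree at most `2λ` with `F(j) = sgn(j)·j^m` for all integers `-λ ≤ j ≤ λ` (hence the
interpolation polynomial of minimal degree), then for `m` even it is an odd function of degree
`2λ-1` with leading coefficient of sign `(-1)^{(2λ-m-2)/2}`, and for `m` odd it is an even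
function of degree `2λ` with leading coefficient of sign `(-1)^{(2λ-m-1)/2}`. -/
theorem stmt5 (l m : ℕ) (hl : 1 ≤ l) (hm : m ≤ 2*l - 1)
    (F : Polynomial ℝ) (hdeg : F.natDegree ≤ 2*l)
    (hF : ∀ j : ℤ, |j| ≤ (l : ℤ) → F.eval (j : ℝ) = (Int.sign j : ℝ) * (j : ℝ) ^ m) :
    (Even m → (∀ x : ℝ, F.eval (-x) = -F.eval x) ∧ F.natDegree = 2*l - 1 ∧
      0 < (-1 : ℝ) ^ ((2*l - m - 2)/2) * F.leadingCoeff) ∧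
    (Odd m → (∀ x : ℝ, F.eval (-x) = F.eval x) ∧ F.natDegree = 2*l ∧
      0 < (-1 : ℝ) ^ ((2*l - m - 1)/2) * F.leadingCoeff) := by
  constructor
  · intro hme
    obtain ⟨k, hk⟩ := hme
    have hcompdeg : (F.comp (-X)).natDegree ≤ 2*l := by
      rw [natDegree_comp]
      simp only [natDegree_neg, natDegree_X, mul_one]
      exact hdeg
    have hodd : F.comp (-X) = -F := by
      apply poly_eq_of_eval_eq l _ _ hcompdeg (by rw [natDegree_neg]; exact hdeg)
      intro j hj
      rw [eval_comp]
      simp only [eval_neg, eval_X]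
      rw [show -((j:ℤ):ℝ) = ((-j:ℤ):ℝ) by push_cast; ring, hF _ (by rwa [abs_neg]),
        Int.sign_neg]
      push_cast
      rw [Even.neg_pow ⟨k, hk⟩, hF j hj]
      push_cast
      ring
    have hoddf : ∀ x : ℝ, F.eval (-x) = -F.eval x := by
      intro x
      have h1 := congrArg (eval x) hodd
      rwa [eval_comp, eval_neg, eval_X, eval_neg] at h1
    have hFne : F ≠ 0 := by
      intro h0
      have h1 := hF 1 (by simpa using (by exact_mod_cast hl : (1:ℤ) ≤ (l:ℤ)))
      rw [h0] at h1
      simp at h1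
    have hcoeff : F.coeff (2*l) = 0 := by
      have h1 := congrArg (fun p => Polynomial.coeff p (2*l)) hodd
      rw [coeff_comp_neg_X, coeff_neg, Even.neg_one_pow ⟨l, by ring⟩] at h1
      linarith
    have hdeg' : F.natDegree ≤ 2*l - 1 := by
      rw [Polynomial.natDegree_le_iff_coeff_eq_zero]
      intro k' hk'
      rcases eq_or_lt_of_le (show 2*l ≤ k' by omega) with rfl | hlt
      · exact hcoeff
      · exact coeff_eq_zero_of_natDegree_lt (by omega)
    have hm2 : m ≤ 2*l - 2 := by omega
    have hXF : (X * F).natDegree ≤ 2*l := by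
      rw [natDegree_mul X_ne_zero hFne, natDegree_X]
      omega
    have hXFval : ∀ j : ℤ, |j| ≤ (l:ℤ) → (X*F).eval (j:ℝ) = (Int.sign j : ℝ) * (j:ℝ)^(m+1) := by
      intro j hj
      rw [eval_mul, eval_X, hF j hj, pow_succ]
      ring
    obtain ⟨-, hdeg2, hsign⟩ := core_odd l (m/2) hl (by omega) (X*F) hXF (by
      have h2 : 2*(m/2)+1 = m+1 := by omega
      rw [h2]
      exact hXFval)
    have hdegXF : (X*F).natDegree = 1 + F.natDegree := by
      rw [natDegree_mul X_ne_zero hFne, natDegree_X]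
    have hlcXF : (X*F).leadingCoeff = F.leadingCoeff := by
      rw [leadingCoeff_mul, leadingCoeff_X, one_mul]
    refine ⟨hoddf, by omega, ?_⟩
    have hexp : l - m/2 - 1 = (2*l - m - 2)/2 := by omega
    rw [← hexp, ← hlcXF]
    exact hsign
  · intro hmo
    obtain ⟨r, hr⟩ := hmo
    have hrl : r < l := by omega
    obtain ⟨h1, h2, h3⟩ := core_odd l r hl hrl F hdeg (by rw [← hr]; exact hF)
    refine ⟨h1, h2, ?_⟩
    have hexp : l - r - 1 = (2*l - m - 1)/2 := by omega
    rw [← hexp]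
    exact h3
end

section
/- Let t ≥ 1 be an integer and n ≥ 2 be a squarefree integer. Then L_t(n) = - Σ_{d | n} d · [ (Σ_{e | n, e ≤ d} μ(e))^t - (Σ_{e | n, e < d} μ(e))^t ]. -/
/-!
For fixed `n`, `z ↦ M(n,z)^t` is a step function: at each divisor `d` of `n` it jumps by
`c_d = (∑_{e ∣ n, e ≤ d} μ(e))^t - (∑_{e ∣ n, e < d} μ(e))^t`,
so `M(n,z)^t = ∑_{d ∣ n, d ≤ z} c_d` (the sum telescopes, and `0^t = 0`).
Integrating over `[1,n]` gives `∑_{d ∣ n} c_d (n - d)`, and `∑_{d ∣ n} c_d` telescopes to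
`(∑_{d ∣ n} μ(d))^t = 0` because `n ≠ 1`.
-/

open Finset MeasureTheory

/-- Truncated convolution of the Möbius function: `M(n,z) = ∑_{d ∣ n, d ≤ z} μ(d)`. -/
noncomputable def Mfun (n : ℕ) (z : ℝ) : ℤ :=
  ∑ d ∈ n.divisors.filter (fun d : ℕ => (d : ℝ) ≤ z), ArithmeticFunction.moebius d

/-- `L_t(n) = ∫_1^n M(n,z)^t dz`. -/
noncomputable def Lfun (t n : ℕ) : ℝ :=
  ∫ z in (1:ℝ)..(n:ℝ), ((Mfun n z : ℤ) : ℝ) ^ t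

section Step
variable {E : Type*} [NormedAddCommGroup E]

theorem intervalIntegrable_indicator_Ici_const (x : ℝ) (c : E) (a b : ℝ) :
    IntervalIntegrable ((Set.Ici x).indicator fun _ => c) volume a b :=
  ⟨intervalIntegrable_const.1.indicator measurableSet_Ici,
    intervalIntegrable_const.2.indicator measurableSet_Ici⟩

variable [NormedSpace ℝ E] [CompleteSpace E] {a b x : ℝ}

theorem integral_indicator_Ici_const (c : E) (hax : a ≤ x) (hxb : x ≤ b) :
    ∫ z in a..b, (Set.Ici x).indicator (fun _ => c) z = (b - x) • c := by
  have below : ∫ z in a..x, (Set.Ici x).indicator (fun _ => c) z = 0 := by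
    rw [intervalIntegral.integral_congr_uIoo (g := fun _ => 0), intervalIntegral.integral_zero]
    intro z hz
    rw [Set.uIoo_of_le hax] at hz
    exact Set.indicator_of_notMem (Set.notMem_Ici.2 hz.2) _
  have above : ∫ z in x..b, (Set.Ici x).indicator (fun _ => c) z = (b - x) • c := by
    rw [intervalIntegral.integral_congr (g := fun _ => c), intervalIntegral.integral_const]
    intro z hz
    rw [Set.uIcc_of_le hxb] at hz
    exact Set.indicator_of_mem hz.1 _
  rw [← intervalIntegral.integral_add_adjacent_intervals
      (intervalIntegrable_indicator_Ici_const x c a x)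
      (intervalIntegrable_indicator_Ici_const x c x b), below, above, zero_add]

theorem integral_sum_filter_le {ι : Type*} (s : Finset ι) (x : ι → ℝ) (c : ι → E)
    (hx : ∀ i ∈ s, x i ∈ Set.Icc a b) :
    ∫ z in a..b, ∑ i ∈ s with x i ≤ z, c i = ∑ i ∈ s, (b - x i) • c i := by
  have hsum : ∀ z, ∑ i ∈ s with x i ≤ z, c i =
      ∑ i ∈ s, (Set.Ici (x i)).indicator (fun _ => c i) z := by
    intro z
    simp only [sum_filter, Set.indicator_apply, Set.mem_Ici]
  simp_rw [hsum]
  rw [intervalIntegral.integral_finsetSum fun i _ => intervalIntegrable_indicator_Ici_const _ _ _ _]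
  exact sum_congr rfl fun i hi => integral_indicator_Ici_const _ (hx i hi).1 (hx i hi).2

end Step

section Telescope
variable {α M N : Type*} [LinearOrder α] [AddCommMonoid M] [AddCommGroup N]

theorem Finset.sum_sub_filter_le_filter_lt (s : Finset α) (f : α → M) (g : M → N) :
    ∑ d ∈ s, (g (∑ e ∈ s with e ≤ d, f e) - g (∑ e ∈ s with e < d, f e)) =
      g (∑ e ∈ s, f e) - g 0 := by
  induction s using Finset.induction_on_max with
  | empty => simp
  | insert a s hlt ih =>
    have ha : a ∉ s := fun h => lt_irrefl a (hlt a h)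
    have hle : ∀ d ∈ s, (insert a s).filter (· ≤ d) = s.filter (· ≤ d) := by
      intro d hd
      rw [filter_insert, if_neg (not_le.2 (hlt d hd))]
    have hlt' : ∀ d ∈ s, (insert a s).filter (· < d) = s.filter (· < d) := by
      intro d hd
      rw [filter_insert, if_neg (not_lt.2 (hlt d hd).le)]
    have hrest : ∑ d ∈ s, (g (∑ e ∈ insert a s with e ≤ d, f e) -
        g (∑ e ∈ insert a s with e < d, f e)) = g (∑ e ∈ s, f e) - g 0 := by
      rw [← ih]
      exact sum_congr rfl fun d hd => by rw [hle d hd, hlt' d hd]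
    have htop_le : (insert a s).filter (· ≤ a) = insert a s :=
      filter_true_of_mem fun e he => (mem_insert.1 he).elim le_of_eq fun he => (hlt e he).le
    have htop_lt : (insert a s).filter (· < a) = s := by
      rw [filter_insert, if_neg (lt_irrefl a), filter_true_of_mem hlt]
    rw [sum_insert ha, hrest, htop_le, htop_lt, sum_insert ha]
    abel

theorem Finset.sum_filter_sub_filter_le_filter_lt (s : Finset α) (p : α → Prop)
    [DecidablePred p] (hp : ∀ ⦃a b⦄, a ≤ b → p b → p a) (f : α → M) (g : M → N) :
    ∑ d ∈ s with p d, (g (∑ e ∈ s with e ≤ d, f e) - g (∑ e ∈ s with e < d, f e)) =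
      g (∑ e ∈ s with p e, f e) - g 0 := by
  rw [← sum_sub_filter_le_filter_lt]
  refine sum_congr rfl fun d hd => ?_
  have hpd := (mem_filter.1 hd).2
  rw [filter_filter, filter_filter,
    filter_congr fun e _ => and_iff_right_of_imp fun hed => hp hed hpd,
    filter_congr fun e _ => and_iff_right_of_imp fun hed => hp hed.le hpd]

end Telescope

open ArithmeticFunction
open scoped ArithmeticFunction.Moebius

theorem sum_divisors_moebius_eq_zero {R : Type*} [Ring R] {n : ℕ} (hn : n ≠ 1) :
    ∑ d ∈ n.divisors, (μ d : R) = 0 := by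
  rw [← one_apply_ne (R := R) hn, ← coe_moebius_mul_coe_zeta, coe_mul_zeta_apply]
  simp only [intCoe_apply]

theorem Mfun_pow_eq_sum {t : ℕ} (ht : t ≠ 0) (n : ℕ) (z : ℝ) :
    ((Mfun n z : ℤ) : ℝ) ^ t = ∑ d ∈ n.divisors.filter (fun d : ℕ => (d : ℝ) ≤ z),
      ((∑ e ∈ n.divisors with e ≤ d, (μ e : ℝ)) ^ t -
        (∑ e ∈ n.divisors with e < d, (μ e : ℝ)) ^ t) := by
  rw [sum_filter_sub_filter_le_filter_lt _ _ (fun a b hab hb => (Nat.cast_le.2 hab).trans hb)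
    (fun e => (μ e : ℝ)) (· ^ t),
    zero_pow ht, sub_zero, Mfun, Int.cast_sum]

theorem stmt9_general (t n : ℕ) (ht : 1 ≤ t) (hn : 2 ≤ n) :
    Lfun t n = -∑ d ∈ n.divisors, (d : ℝ) *
      ((∑ e ∈ n.divisors.filter (· ≤ d), ((ArithmeticFunction.moebius e : ℤ) : ℝ)) ^ t -
        (∑ e ∈ n.divisors.filter (· < d), ((ArithmeticFunction.moebius e : ℤ) : ℝ)) ^ t) := by
  set c : ℕ → ℝ := fun d => (∑ e ∈ n.divisors with e ≤ d, (μ e : ℝ)) ^ t -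
    (∑ e ∈ n.divisors with e < d, (μ e : ℝ)) ^ t
  have hdiv : ∀ d ∈ n.divisors, (d : ℝ) ∈ Set.Icc 1 (n : ℝ) := fun d hd =>
    ⟨Nat.one_le_cast.2 (Nat.pos_of_mem_divisors hd), Nat.cast_le.2 (Nat.divisor_le hd)⟩
  have hc : ∑ d ∈ n.divisors, c d = 0 := by
    rw [sum_sub_filter_le_filter_lt _ _ (· ^ t), sum_divisors_moebius_eq_zero (by omega),
      sub_self]
  calc Lfun t n
      = ∫ z in (1 : ℝ)..n, ∑ d ∈ n.divisors.filter (fun d : ℕ => (d : ℝ) ≤ z), c d :=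
        intervalIntegral.integral_congr fun z _ => Mfun_pow_eq_sum (by omega) n z
    _ = ∑ d ∈ n.divisors, ((n : ℝ) - d) • c d := integral_sum_filter_le _ _ _ hdiv
    _ = n * ∑ d ∈ n.divisors, c d - ∑ d ∈ n.divisors, (d : ℝ) * c d := by
        rw [mul_sum, ← sum_sub_distrib]
        exact sum_congr rfl fun d _ => by rw [smul_eq_mul]; ring
    _ = _ := by rw [hc, mul_zero, zero_sub]

theorem stmt9 (t n : ℕ) (ht : 1 ≤ t) (hn : 2 ≤ n) (hsf : Squarefree n) :
    Lfun t n = -∑ d ∈ n.divisors, (d : ℝ) *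
      ((∑ e ∈ n.divisors.filter (· ≤ d), ((ArithmeticFunction.moebius e : ℤ) : ℝ)) ^ t -
        (∑ e ∈ n.divisors.filter (· < d), ((ArithmeticFunction.moebius e : ℤ) : ℝ)) ^ t) :=
  stmt9_general t n ht hn
end

section
/- Let t ≥ 2 be an integer and n ≥ 2 be a squarefree integer. Then |L_t(n)| ≤ t · n · 𝒥_{t-1}(n). -/
open Finset

/-- `𝒥_ρ(n) = ∑_{i=1}^{τ(n)} i^ρ / d_i`, where `d_1 < d_2 < ⋯ < d_{τ(n)}` is the increasing
sequence of the divisors of `n`. -/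
noncomputable def Jfun (ρ : ℝ) (n : ℕ) : ℝ :=
  ∑ i ∈ Finset.range n.divisors.card,
    ((i : ℝ) + 1) ^ ρ / (((n.divisors.sort (· ≤ ·)).getD i 0 : ℕ) : ℝ)

open ArithmeticFunction

lemma moebius_total (n : ℕ) (hn : 2 ≤ n) (hsf : Squarefree n) :
    ∑ d ∈ n.divisors, (moebius d : ℤ) = 0 := by
  have h := ArithmeticFunction.IsMultiplicative.prodPrimeFactors_one_sub_of_squarefree
    (ArithmeticFunction.zeta : ArithmeticFunction ℤ) (isMultiplicative_zeta.natCast) hsf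
  have hL : ∏ p ∈ n.primeFactors, (1 - (ArithmeticFunction.zeta : ArithmeticFunction ℤ) p) = 0 := by
    obtain ⟨p, hp⟩ := (Nat.nonempty_primeFactors.2 (lt_of_lt_of_le one_lt_two hn)).exists_mem
    apply Finset.prod_eq_zero hp
    have hp0 : p ≠ 0 := (Nat.prime_of_mem_primeFactors hp).ne_zero
    simp [ArithmeticFunction.zeta_apply, hp0]
  rw [hL] at h
  simp only [Int.cast_id] at h
  have heq : ∑ d ∈ n.divisors, (moebius d : ℤ)
      = ∑ d ∈ n.divisors, (moebius d : ℤ) * (ArithmeticFunction.zeta : ArithmeticFunction ℤ) d := by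
    apply Finset.sum_congr rfl
    intro d hd
    have hd0 : d ≠ 0 := (Nat.pos_of_mem_divisors hd).ne'
    simp [ArithmeticFunction.zeta_apply, hd0]
  exact heq.trans h.symm

lemma Mfun_eq_neg (n : ℕ) (hn : 2 ≤ n) (hsf : Squarefree n) (z : ℝ) :
    Mfun n z = - ∑ d ∈ n.divisors.filter (fun d : ℕ => z < (d : ℝ)), (moebius d : ℤ) := by
  have h := Finset.sum_filter_add_sum_filter_not n.divisors
    (fun d : ℕ => (d : ℝ) ≤ z) (fun d => (moebius d : ℤ))
  rw [moebius_total n hn hsf] at h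
  have : (n.divisors.filter (fun d : ℕ => ¬ (d : ℝ) ≤ z))
      = n.divisors.filter (fun d : ℕ => z < (d : ℝ)) := by
    apply Finset.filter_congr; intro d _; simp [not_le]
  rw [this] at h
  unfold Mfun
  omega

lemma Mfun_abs_le (n : ℕ) (hn : 2 ≤ n) (hsf : Squarefree n) (z : ℝ) :
    |Mfun n z| ≤ ((n.divisors.filter (fun d : ℕ => z < (d : ℝ))).card : ℤ) := by
  rw [Mfun_eq_neg n hn hsf z, abs_neg]
  calc |∑ d ∈ n.divisors.filter (fun d : ℕ => z < (d : ℝ)), (moebius d : ℤ)|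
      ≤ ∑ d ∈ n.divisors.filter (fun d : ℕ => z < (d : ℝ)), |(moebius d : ℤ)| :=
        Finset.abs_sum_le_sum_abs _ _
    _ ≤ ∑ d ∈ n.divisors.filter (fun d : ℕ => z < (d : ℝ)), 1 := by
        apply Finset.sum_le_sum; intro d _; exact ArithmeticFunction.abs_moebius_le_one
    _ = _ := by simp

def rk (n d : ℕ) : ℕ := (n.divisors.filter (fun e => d ≤ e)).card

lemma aux_pow_succ (c t : ℕ) : (c+1)^(t+1) ≤ c^(t+1) + (t+1)*(c+1)^t := by
  induction t with
  | zero => simp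
  | succ t ih =>
    have h1 : (c+1)^(t+2) = (c+1) * (c+1)^(t+1) := by ring
    have h2 : (c+1) * (c+1)^(t+1) ≤ (c+1) * (c^(t+1) + (t+1)*(c+1)^t) :=
      Nat.mul_le_mul_left _ ih
    have h3 : (c+1) * (c^(t+1) + (t+1)*(c+1)^t)
        = c^(t+2) + c^(t+1) + (t+1)*(c+1)^(t+1) := by ring
    have h4 : c^(t+1) ≤ (c+1)^(t+1) := Nat.pow_le_pow_left (Nat.le_succ c) _
    calc (c+1)^(t+2) = (c+1) * (c+1)^(t+1) := h1
      _ ≤ c^(t+2) + c^(t+1) + (t+1)*(c+1)^(t+1) := h3 ▸ h2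
      _ ≤ c^(t+2) + (c+1)^(t+1) + (t+1)*(c+1)^(t+1) := by omega
      _ = c^(t+2) + (t+2)*(c+1)^(t+1) := by ring

lemma aux_pow_le_sum (c t : ℕ) : c^(t+1) ≤ (t+1) * ∑ j ∈ range c, (j+1)^t := by
  induction c with
  | zero => simp
  | succ c ih =>
    rw [Finset.sum_range_succ, Nat.mul_add]
    calc (c+1)^(t+1) ≤ c^(t+1) + (t+1)*(c+1)^t := aux_pow_succ c t
      _ ≤ (t+1) * ∑ j ∈ range c, (j+1)^t + (t+1)*(c+1)^t := by omega

lemma aux_rank_image (S : Finset ℕ) :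
    S.image (fun d => (S.filter (fun e => d ≤ e)).card) = Icc 1 S.card := by
  have hanti : ∀ d ∈ S, ∀ d' ∈ S, d < d' →
      (S.filter (fun e => d' ≤ e)).card < (S.filter (fun e => d ≤ e)).card := by
    intro d hd d' hd' hlt
    apply Finset.card_lt_card
    constructor
    · intro e he
      simp only [mem_filter] at he ⊢
      exact ⟨he.1, le_trans hlt.le he.2⟩
    · intro hsub
      have : d ∈ S.filter (fun e => d ≤ e) := by simp [hd]
      have := hsub this
      simp only [mem_filter] at this
      omega
  have hinj : Set.InjOn (fun d => (S.filter (fun e => d ≤ e)).card) S := by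
    intro d hd d' hd' h
    dsimp only at h
    rcases lt_trichotomy d d' with hlt | he | hlt
    · have := hanti d hd d' hd' hlt; omega
    · exact he
    · have := hanti d' hd' d hd hlt; omega
  apply Finset.eq_of_subset_of_card_le
  · intro j hj
    simp only [mem_image] at hj
    obtain ⟨d, hd, rfl⟩ := hj
    simp only [mem_Icc]
    constructor
    · exact Finset.card_pos.2 ⟨d, by simp [hd]⟩
    · exact Finset.card_le_card (filter_subset _ _)
  · rw [Nat.card_Icc, Finset.card_image_of_injOn hinj]
    omega

lemma aux_rank_injOn (S : Finset ℕ) :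
    Set.InjOn (fun d => (S.filter (fun e => d ≤ e)).card) S := by
  intro d hd d' hd' h
  dsimp only at h
  have hanti : ∀ a ∈ S, ∀ b ∈ S, a < b →
      (S.filter (fun e => b ≤ e)).card < (S.filter (fun e => a ≤ e)).card := by
    intro a ha b hb hlt
    apply Finset.card_lt_card
    constructor
    · intro e he
      simp only [mem_filter] at he ⊢
      exact ⟨he.1, le_trans hlt.le he.2⟩
    · intro hsub
      have : a ∈ S.filter (fun e => a ≤ e) := by simp [ha]
      have := hsub this
      simp only [mem_filter] at this
      omega
  rcases lt_trichotomy d d' with hlt | he | hlt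
  · have := hanti d hd d' hd' hlt; omega
  · exact he
  · have := hanti d' hd' d hd hlt; omega

lemma aux_sum_rank {M : Type*} [AddCommMonoid M] (S : Finset ℕ) (f : ℕ → M) :
    ∑ d ∈ S, f ((S.filter (fun e => d ≤ e)).card) = ∑ j ∈ Icc 1 S.card, f j := by
  rw [← aux_rank_image S, Finset.sum_image (fun d hd d' hd' h =>
    aux_rank_injOn S (by exact_mod_cast hd) (by exact_mod_cast hd') h)]

lemma ptwise (t n : ℕ) (ht : 2 ≤ t) (hn : 2 ≤ n) (hsf : Squarefree n) (z : ℝ) :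
    |((Mfun n z : ℤ) : ℝ)| ^ t ≤
      ∑ d ∈ n.divisors, ((t : ℝ) * (rk n d : ℝ) ^ (t - 1)) * (if z < (d : ℝ) then 1 else 0) := by
  obtain ⟨s, rfl⟩ : ∃ s, t = s + 1 := ⟨t - 1, by omega⟩
  set S := n.divisors.filter (fun d : ℕ => z < (d : ℝ)) with hS
  have h1 : |((Mfun n z : ℤ) : ℝ)| ≤ (S.card : ℝ) := by
    rw [← Int.cast_abs]
    exact_mod_cast Mfun_abs_le n hn hsf z
  have hfil : ∀ d ∈ S, S.filter (fun e => d ≤ e) = n.divisors.filter (fun e => d ≤ e) := by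
    intro d hd
    rw [hS, mem_filter] at hd
    ext e
    simp only [hS, Finset.filter_filter, mem_filter]
    constructor
    · rintro ⟨he, _, hde⟩; exact ⟨he, hde⟩
    · rintro ⟨he, hde⟩
      exact ⟨he, lt_of_lt_of_le hd.2 (by exact_mod_cast hde), hde⟩
  have hnat : S.card ^ (s+1) ≤ (s+1) * ∑ d ∈ S, (rk n d)^s := by
    calc S.card^(s+1) ≤ (s+1) * ∑ j ∈ range S.card, (j+1)^s := aux_pow_le_sum _ s
      _ = (s+1) * ∑ j ∈ Icc 1 S.card, j^s := by
          rw [← Finset.Ico_add_one_right_eq_Icc, Finset.sum_Ico_eq_sum_range]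
          simp [Nat.add_comm]
      _ = (s+1) * ∑ d ∈ S, ((S.filter (fun e => d ≤ e)).card)^s := by
          rw [aux_sum_rank S (fun j => j ^ s)]
      _ = (s+1) * ∑ d ∈ S, (rk n d)^s := by
          congr 1
          apply Finset.sum_congr rfl
          intro d hd
          rw [rk, hfil d hd]
  have hRHS : ∑ d ∈ n.divisors, (((s:ℝ)+1) * (rk n d : ℝ) ^ s) * (if z < (d : ℝ) then 1 else 0)
      = ((s:ℝ)+1) * ∑ d ∈ S, (rk n d : ℝ)^s := by
    rw [Finset.mul_sum, hS]
    rw [Finset.sum_filter]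
    apply Finset.sum_congr rfl
    intro d _
    by_cases h : z < (d:ℝ) <;> simp [h, mul_comm]
  have hcast : ((s:ℝ)+1) * ∑ d ∈ S, (rk n d : ℝ)^s = (((s+1) * ∑ d ∈ S, (rk n d)^s : ℕ) : ℝ) := by
    push_cast; ring
  calc |((Mfun n z : ℤ) : ℝ)| ^ (s+1) ≤ (S.card : ℝ)^(s+1) :=
        pow_le_pow_left₀ (abs_nonneg _) h1 _
    _ = ((S.card^(s+1) : ℕ) : ℝ) := by push_cast; ring
    _ ≤ (((s+1) * ∑ d ∈ S, (rk n d)^s : ℕ) : ℝ) := by exact_mod_cast hnat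
    _ = ∑ d ∈ n.divisors, (((s:ℝ)+1) * (rk n d : ℝ) ^ s) * (if z < (d : ℝ) then 1 else 0) := by
        rw [hRHS, hcast]
    _ = ∑ d ∈ n.divisors, (((s+1:ℕ):ℝ) * (rk n d : ℝ) ^ (s+1-1)) * (if z < (d : ℝ) then 1 else 0) := by
        apply Finset.sum_congr rfl
        intro d _
        norm_num

open MeasureTheory intervalIntegral

lemma meas_bdd_II {f : ℝ → ℝ} (hf : Measurable f) {C : ℝ} (hC : ∀ x, |f x| ≤ C) (a b : ℝ) :
    IntervalIntegrable f volume a b := by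
  rw [intervalIntegrable_iff]
  apply MeasureTheory.Integrable.mono' (g := fun _ => C)
  · have : volume (Set.uIoc a b) < ⊤ := by
      rw [Set.uIoc, Real.volume_Ioc]
      exact ENNReal.ofReal_lt_top
    exact integrableOn_const (C := C) this.ne
  · exact hf.aestronglyMeasurable.restrict
  · exact MeasureTheory.ae_of_all _ (fun x => by simpa [Real.norm_eq_abs] using hC x)

lemma Mfun_cast_eq (n : ℕ) : (fun z : ℝ => ((Mfun n z : ℤ) : ℝ))
    = fun z : ℝ => ∑ d ∈ n.divisors, (if (d:ℝ) ≤ z then ((moebius d : ℤ) : ℝ) else 0) := by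
  funext z
  rw [Mfun, Finset.sum_filter]
  push_cast [apply_ite (fun x : ℤ => (x : ℝ))]
  rfl

lemma Mfun_meas (n t : ℕ) : Measurable (fun z : ℝ => ((Mfun n z : ℤ) : ℝ) ^ t) := by
  apply Measurable.pow_const
  rw [Mfun_cast_eq]
  exact Finset.measurable_sum _ (fun d _ =>
    Measurable.ite (measurableSet_Ici (a := (d:ℝ))) measurable_const measurable_const)

lemma Mfun_abs_le' (n : ℕ) (z : ℝ) : |Mfun n z| ≤ (n.divisors.card : ℤ) := by
  rw [Mfun]
  calc |∑ d ∈ n.divisors.filter (fun d : ℕ => (d:ℝ) ≤ z), (moebius d : ℤ)|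
      ≤ ∑ d ∈ n.divisors.filter (fun d : ℕ => (d:ℝ) ≤ z), |(moebius d : ℤ)| :=
        Finset.abs_sum_le_sum_abs _ _
    _ ≤ ∑ _d ∈ n.divisors.filter (fun d : ℕ => (d:ℝ) ≤ z), 1 :=
        Finset.sum_le_sum (fun d _ => ArithmeticFunction.abs_moebius_le_one)
    _ = ((n.divisors.filter (fun d : ℕ => (d:ℝ) ≤ z)).card : ℤ) := by simp
    _ ≤ _ := by exact_mod_cast Finset.card_le_card (Finset.filter_subset _ _)

lemma Mfun_II (n t : ℕ) (a b : ℝ) :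
    IntervalIntegrable (fun z : ℝ => ((Mfun n z : ℤ) : ℝ) ^ t) volume a b := by
  apply meas_bdd_II (Mfun_meas n t) (C := (n.divisors.card : ℝ) ^ t)
  intro x
  rw [abs_pow]
  apply pow_le_pow_left₀ (abs_nonneg _) _ t
  rw [← Int.cast_abs]
  exact_mod_cast Mfun_abs_le' n x

lemma ind_meas (d : ℝ) : Measurable (fun z : ℝ => if z < d then (1:ℝ) else 0) :=
  Measurable.ite (measurableSet_Iio (a := d)) measurable_const measurable_const

lemma ind_II (d a b : ℝ) :
    IntervalIntegrable (fun z : ℝ => if z < d then (1:ℝ) else 0) volume a b := by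
  apply meas_bdd_II (ind_meas d) (C := 1) _ a b
  intro x
  split <;> simp

lemma ind_integral (d b : ℝ) (h1 : 1 ≤ d) (h2 : d ≤ b) :
    ∫ z in (1:ℝ)..b, (if z < d then (1:ℝ) else 0) = d - 1 := by
  rw [← intervalIntegral.integral_add_adjacent_intervals (ind_II d 1 d) (ind_II d d b)]
  have e1 : ∫ z in (1:ℝ)..d, (if z < d then (1:ℝ) else 0) = d - 1 := by
    have hae : ∀ᵐ x : ℝ, x ≠ d := by
      rw [MeasureTheory.ae_iff]
      simpa [Set.setOf_eq_eq_singleton] using Real.volume_singleton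
    rw [intervalIntegral.integral_congr_ae (g := fun _ => (1:ℝ))
      (by filter_upwards [hae] with x hx hmem
          rw [Set.uIoc_of_le h1] at hmem
          have hxd : x < d := lt_of_le_of_ne hmem.2 hx
          simp [hxd])]
    simp
  have e2 : ∫ z in d..b, (if z < d then (1:ℝ) else 0) = 0 := by
    rw [intervalIntegral.integral_congr_ae (g := fun _ => (0:ℝ))
      (by filter_upwards with x hmem
          rw [Set.uIoc_of_le h2] at hmem
          have : ¬ x < d := not_lt.2 hmem.1.le
          simp [this])]
    simp
  rw [e1, e2]; ring

lemma final_sum (s n : ℕ) (hn : 2 ≤ n) :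
    ∑ d ∈ n.divisors, (rk n d : ℝ) ^ s * (d : ℝ)
      = ∑ i ∈ Finset.range n.divisors.card,
          ((i : ℝ) + 1) ^ s * ((n : ℝ) / (((n.divisors.sort (· ≤ ·)).getD i 0 : ℕ) : ℝ)) := by
  have h0 : n ≠ 0 := by omega
  set τ := n.divisors.card with hτ
  set emb := n.divisors.orderEmbOfFin hτ.symm with hemb
  have himg : Finset.image (fun i => emb i) Finset.univ = n.divisors := by
    apply Finset.coe_injective
    rw [Finset.coe_image, Finset.coe_univ, Set.image_univ]
    exact Finset.range_orderEmbOfFin n.divisors hτ.symm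
  have hmem : ∀ i, emb i ∈ n.divisors := fun i => Finset.orderEmbOfFin_mem n.divisors hτ.symm i
  have hfiltercard : ∀ (P : ℕ → Prop) [DecidablePred P],
      (n.divisors.filter P).card = (Finset.univ.filter (fun j : Fin τ => P (emb j))).card := by
    intro P _
    rw [← himg, Finset.filter_image, Finset.card_image_of_injective _ emb.injective]
  have hrk : ∀ i : Fin τ, rk n (emb i) = τ - i.val := by
    intro i
    rw [rk, hfiltercard]
    have he : (Finset.univ.filter (fun j : Fin τ => emb i ≤ emb j)) = Finset.Ici i := by
      rw [← Finset.filter_le_eq_Ici]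
      apply Finset.filter_congr
      intro j _
      simp [emb.le_iff_le]
    rw [he, Fin.card_Ici]
  have hle : ∀ i : Fin τ, (n.divisors.filter (fun e => e ≤ emb i)).card = i.val + 1 := by
    intro i
    rw [hfiltercard]
    have he : (Finset.univ.filter (fun j : Fin τ => emb j ≤ emb i)) = Finset.Iic i := by
      rw [← Finset.filter_ge_eq_Iic]
      apply Finset.filter_congr
      intro j _
      simp [emb.le_iff_le]
    rw [he, Fin.card_Iic]
  have hswap : ∀ d ∈ n.divisors, ∀ e ∈ n.divisors, (n / d ≤ e ↔ n / e ≤ d) := by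
    have key : ∀ a ∈ n.divisors, ∀ b : ℕ, (n / a ≤ b ↔ n ≤ b * a) := by
      intro a ha b
      have hd : a ∣ n := (Nat.mem_divisors.1 ha).1
      have ha0 : 0 < a := Nat.pos_of_mem_divisors ha
      constructor
      · intro h
        calc n = n / a * a := (Nat.div_mul_cancel hd).symm
          _ ≤ b * a := Nat.mul_le_mul_right a h
      · intro h
        have h2 := Nat.div_le_div_right (c := a) h
        rwa [Nat.mul_div_cancel _ ha0] at h2
    intro d hd e he
    rw [key d hd e, key e he d, Nat.mul_comm]
  have hdivmem : ∀ d ∈ n.divisors, n / d ∈ n.divisors := by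
    intro d hd
    exact Nat.mem_divisors.2 ⟨Nat.div_dvd_of_dvd (Nat.mem_divisors.1 hd).1, h0⟩
  have hpair : ∀ i : Fin τ, n / emb i = emb i.rev := by
    intro i
    have hdmem := hmem i
    have hddvd : (emb i : ℕ) ∣ n := (Nat.mem_divisors.1 hdmem).1
    have hndmem : n / emb i ∈ n.divisors := hdivmem _ hdmem
    have h1 : rk n (n / emb i) = i.val + 1 := by
      rw [rk]
      have himage : n.divisors.filter (fun e => n / emb i ≤ e)
          = Finset.image (fun e => n / e) (n.divisors.filter (fun e => e ≤ emb i)) := by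
        ext x
        simp only [Finset.mem_filter, Finset.mem_image]
        constructor
        · rintro ⟨hx, hle2⟩
          exact ⟨n / x, ⟨hdivmem x hx, (hswap (emb i) hdmem x hx).1 hle2⟩,
            Nat.div_div_self (Nat.mem_divisors.1 hx).1 h0⟩
        · rintro ⟨y, ⟨hy, hyd⟩, rfl⟩
          refine ⟨hdivmem y hy, ?_⟩
          rw [hswap (emb i) hdmem (n / y) (hdivmem y hy),
            Nat.div_div_self (Nat.mem_divisors.1 hy).1 h0]
          exact hyd
      have hinj2 : Set.InjOn (fun e => n / e) (n.divisors.filter (fun e => e ≤ emb i)) := by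
        intro x hx y hy hxy
        simp only [Finset.coe_filter, Set.mem_setOf_eq] at hx hy
        dsimp only at hxy
        have : n / (n / x) = n / (n / y) := by rw [hxy]
        rwa [Nat.div_div_self (Nat.mem_divisors.1 hx.1).1 h0,
          Nat.div_div_self (Nat.mem_divisors.1 hy.1).1 h0] at this
      rw [himage, Finset.card_image_of_injOn hinj2]
      exact hle i
    have h2 : rk n (emb i.rev) = i.val + 1 := by
      rw [hrk i.rev, Fin.val_rev]
      have := i.isLt
      omega
    have hinj := aux_rank_injOn n.divisors
    exact hinj (Finset.mem_coe.2 hndmem) (Finset.mem_coe.2 (hmem i.rev)) (h1.trans h2.symm)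
  have hgetD : ∀ i : Fin τ, ((n.divisors.sort (· ≤ ·)).getD i.val 0) = emb i := by
    intro i
    have hlen : i.val < (n.divisors.sort (· ≤ ·)).length := by
      rw [Finset.length_sort]; exact i.isLt
    rw [List.getD_eq_getElem _ _ hlen]
    exact (Finset.orderEmbOfFin_apply n.divisors hτ.symm i).symm
  set L := n.divisors.sort (· ≤ ·) with hL
  set g : ℕ → ℝ := fun k => ((τ - k : ℕ) : ℝ) ^ s * ((L.getD k 0 : ℕ) : ℝ) with hg
  calc ∑ d ∈ n.divisors, (rk n d : ℝ) ^ s * (d : ℝ)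
      = ∑ i : Fin τ, (rk n (emb i) : ℝ) ^ s * ((emb i : ℕ) : ℝ) := by
        rw [← himg, Finset.sum_image (fun x _ y _ h => emb.injective h)]
    _ = ∑ i : Fin τ, g i.val := by
        apply Finset.sum_congr rfl
        intro i _
        simp only [hg, hrk i, hgetD i]
    _ = ∑ i ∈ Finset.range τ, g i := Fin.sum_univ_eq_sum_range g τ
    _ = ∑ i ∈ Finset.range τ, g (τ - 1 - i) := (Finset.sum_range_reflect g τ).symm
    _ = ∑ i ∈ Finset.range τ, ((i : ℝ) + 1) ^ s * ((n : ℝ) / ((L.getD i 0 : ℕ) : ℝ)) := by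
        apply Finset.sum_congr rfl
        intro i hi
        have hiτ : i < τ := Finset.mem_range.1 hi
        set ifin : Fin τ := ⟨i, hiτ⟩ with hifin
        have hval : (ifin : ℕ) = i := rfl
        have hrevval : (ifin.rev : ℕ) = τ - 1 - i := by
          rw [Fin.val_rev, hval]; omega
        have e1 : (τ - (τ - 1 - i) : ℕ) = i + 1 := by omega
        have e2 : L.getD (τ - 1 - i) 0 = emb ifin.rev := by
          rw [← hrevval]; exact hgetD ifin.rev
        have e3 : (emb ifin.rev : ℕ) = n / emb ifin := (hpair ifin).symm
        have e4 : L.getD i 0 = emb ifin := hgetD ifin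
        have hdvd : (emb ifin : ℕ) ∣ n := (Nat.mem_divisors.1 (hmem ifin)).1
        have hne : ((emb ifin : ℕ) : ℝ) ≠ 0 := by
          exact_mod_cast (Nat.pos_of_mem_divisors (hmem ifin)).ne'
        rw [hg]
        dsimp only
        rw [e1, e2, e3, e4, Nat.cast_div hdvd hne]
        push_cast
        ring

set_option maxHeartbeats 2000000 in
theorem stmt10 (t n : ℕ) (ht : 2 ≤ t) (hn : 2 ≤ n) (hsf : Squarefree n) :
    |Lfun t n| ≤ (t : ℝ) * (n : ℝ) * Jfun ((t : ℝ) - 1) n := by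
  have hab : (1:ℝ) ≤ (n:ℝ) := by exact_mod_cast (by omega : 1 ≤ n)
  have hGint : ∀ d ∈ n.divisors, IntervalIntegrable
      (fun z : ℝ => ((t : ℝ) * (rk n d : ℝ) ^ (t-1)) * (if z < (d : ℝ) then 1 else 0))
      volume 1 (n:ℝ) :=
    fun d _ => (ind_II (d:ℝ) 1 (n:ℝ)).const_mul _
  have hG : IntervalIntegrable
      (fun z : ℝ => ∑ d ∈ n.divisors,
        ((t : ℝ) * (rk n d : ℝ) ^ (t-1)) * (if z < (d : ℝ) then 1 else 0)) volume 1 (n:ℝ) := by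
    have hfun : (fun z : ℝ => ∑ d ∈ n.divisors,
        ((t : ℝ) * (rk n d : ℝ) ^ (t-1)) * (if z < (d : ℝ) then 1 else 0))
        = (∑ d ∈ n.divisors, fun z : ℝ =>
            ((t : ℝ) * (rk n d : ℝ) ^ (t-1)) * (if z < (d : ℝ) then 1 else 0)) := by
      funext z
      rw [Finset.sum_apply]
    rw [hfun]
    exact IntervalIntegrable.sum n.divisors hGint
  have step1 : |Lfun t n| ≤ ∫ z in (1:ℝ)..(n:ℝ), |((Mfun n z : ℤ) : ℝ) ^ t| :=
    intervalIntegral.abs_integral_le_integral_abs hab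
  have step2 : (∫ z in (1:ℝ)..(n:ℝ), |((Mfun n z : ℤ) : ℝ) ^ t|)
      ≤ ∫ z in (1:ℝ)..(n:ℝ), ∑ d ∈ n.divisors,
          ((t : ℝ) * (rk n d : ℝ) ^ (t-1)) * (if z < (d : ℝ) then 1 else 0) := by
    apply intervalIntegral.integral_mono_on hab ((Mfun_II n t 1 (n:ℝ)).abs) hG
    intro x _
    rw [abs_pow]
    exact ptwise t n ht hn hsf x
  have step3 : (∫ z in (1:ℝ)..(n:ℝ), ∑ d ∈ n.divisors,
          ((t : ℝ) * (rk n d : ℝ) ^ (t-1)) * (if z < (d : ℝ) then 1 else 0))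
      = ∑ d ∈ n.divisors, ((t : ℝ) * (rk n d : ℝ) ^ (t-1)) * ((d:ℝ) - 1) := by
    rw [intervalIntegral.integral_finset_sum hGint]
    apply Finset.sum_congr rfl
    intro d hd
    have h1d : (1:ℝ) ≤ (d:ℝ) := by exact_mod_cast Nat.pos_of_mem_divisors hd
    have hdn : (d:ℝ) ≤ (n:ℝ) := by exact_mod_cast Nat.divisor_le hd
    rw [intervalIntegral.integral_const_mul, ind_integral (d:ℝ) (n:ℝ) h1d hdn]
  have step4 : ∑ d ∈ n.divisors, ((t : ℝ) * (rk n d : ℝ) ^ (t-1)) * ((d:ℝ) - 1)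
      ≤ ∑ d ∈ n.divisors, ((t : ℝ) * (rk n d : ℝ) ^ (t-1)) * (d:ℝ) := by
    apply Finset.sum_le_sum
    intro d hd
    have hc : (0:ℝ) ≤ (t : ℝ) * (rk n d : ℝ) ^ (t-1) := by positivity
    nlinarith [hc]
  have step5 : ∑ d ∈ n.divisors, ((t : ℝ) * (rk n d : ℝ) ^ (t-1)) * (d:ℝ)
      = (t:ℝ) * ∑ d ∈ n.divisors, (rk n d : ℝ) ^ (t-1) * (d:ℝ) := by
    rw [Finset.mul_sum]
    apply Finset.sum_congr rfl
    intro d _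
    ring
  have hexp : ((t:ℝ) - 1) = ((t - 1 : ℕ) : ℝ) := by
    rw [Nat.cast_sub (by omega : 1 ≤ t), Nat.cast_one]
  have step6 : (n:ℝ) * Jfun ((t:ℝ) - 1) n
      = ∑ d ∈ n.divisors, (rk n d : ℝ) ^ (t-1) * (d:ℝ) := by
    rw [final_sum (t-1) n hn, Jfun, Finset.mul_sum]
    apply Finset.sum_congr rfl
    intro i _
    rw [hexp, Real.rpow_natCast]
    ring
  calc |Lfun t n| ≤ ∫ z in (1:ℝ)..(n:ℝ), |((Mfun n z : ℤ) : ℝ) ^ t| := step1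
    _ ≤ _ := step2
    _ = _ := step3
    _ ≤ _ := step4
    _ = (t:ℝ) * ∑ d ∈ n.divisors, (rk n d : ℝ) ^ (t-1) * (d:ℝ) := step5
    _ = (t:ℝ) * ((n:ℝ) * Jfun ((t:ℝ) - 1) n) := by rw [step6]
    _ = (t : ℝ) * (n : ℝ) * Jfun ((t : ℝ) - 1) n := by ring
end

section
/- Let ρ ≥ 0 be an integer and n ≥ 1 be a squarefree integer. Then 𝒥_ρ(n) ≤ η(n, ρ+1)^{ρ+1}. -/
open Finset

/-- `η(n,t) = ∏_{p ∣ n} (1 + p^{-1/t})`. -/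
noncomputable def eta (n : ℕ) (t : ℝ) : ℝ :=
  ∏ p ∈ n.primeFactors, (1 + (p : ℝ) ^ (-(1/t)))

/-!
Put `t = ρ + 1` and `S = ∑_{d ∣ n} d^{-1/t}`. For the `i`-th divisor `d_i`,
`i ≤ ∑_{j ≤ i} (d_i / d_j)^{1/t} ≤ d_i^{1/t} S`, hence `i^ρ / d_i ≤ S^ρ d_i^{ρ/t - 1} = S^ρ d_i^{-1/t}`,
and summing over `i` gives `𝒥_ρ(n) ≤ S^{ρ+1}`. This only uses that the `d_i` increase, so it holds
for every increasing sequence of positive reals and every real `ρ ≥ 0`. Finally, `d ↦ d^{-1/t}` is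
multiplicative, so for squarefree `n` the sum `S` factors as the Euler product `η(n, t)`.
-/

section MonotoneSequence

variable {k : ℕ} {d : Fin k → ℝ}

theorem Monotone.succ_le_rpow_mul_sum_rpow_neg (hd : Monotone d) (hpos : ∀ i, 0 < d i)
    {t : ℝ} (ht : 0 ≤ t) (i : Fin k) :
    ((i : ℕ) : ℝ) + 1 ≤ d i ^ t * ∑ j, d j ^ (-t) := by
  have hterm_nonneg : ∀ j, 0 ≤ d i ^ t * d j ^ (-t) := fun j => by
    have := hpos i; have := hpos j; positivity
  calc ((i : ℕ) : ℝ) + 1 = ∑ _j ∈ Iic i, (1 : ℝ) := by simp [Fin.card_Iic]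
    _ ≤ ∑ j ∈ Iic i, d i ^ t * d j ^ (-t) := by
      refine sum_le_sum fun j hj => ?_
      rw [Real.rpow_neg (hpos j).le, ← div_eq_mul_inv, ← Real.div_rpow (hpos i).le (hpos j).le]
      exact Real.one_le_rpow ((one_le_div (hpos j)).2 (hd (mem_Iic.1 hj))) ht
    _ ≤ ∑ j, d i ^ t * d j ^ (-t) :=
      sum_le_sum_of_subset_of_nonneg (subset_univ _) fun j _ _ => hterm_nonneg j
    _ = d i ^ t * ∑ j, d j ^ (-t) := (mul_sum _ _ _).symm

theorem Monotone.sum_succ_rpow_div_le (hd : Monotone d) (hpos : ∀ i, 0 < d i)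
    {ρ : ℝ} (hρ : 0 ≤ ρ) :
    ∑ i : Fin k, (((i : ℕ) : ℝ) + 1) ^ ρ / d i ≤ (∑ i, d i ^ (-(1 / (ρ + 1)))) ^ (ρ + 1) := by
  set t : ℝ := 1 / (ρ + 1)
  set S := ∑ i, d i ^ (-t)
  have hS : 0 ≤ S := sum_nonneg fun i _ => (Real.rpow_pos_of_pos (hpos i) _).le
  have hexp : t * ρ - 1 = -t := by
    have : ρ + 1 ≠ 0 := by positivity
    simp only [t]; field_simp; ring
  have hterm : ∀ i : Fin k, (((i : ℕ) : ℝ) + 1) ^ ρ / d i ≤ S ^ ρ * d i ^ (-t) := fun i => calc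
    (((i : ℕ) : ℝ) + 1) ^ ρ / d i ≤ (d i ^ t * S) ^ ρ / d i :=
      div_le_div_of_nonneg_right (Real.rpow_le_rpow (by positivity)
        (hd.succ_le_rpow_mul_sum_rpow_neg hpos (by positivity) i) hρ) (hpos i).le
    _ = S ^ ρ * d i ^ (-t) := by
      rw [Real.mul_rpow (Real.rpow_nonneg (hpos i).le _) hS, ← Real.rpow_mul (hpos i).le, mul_comm,
        mul_div_assoc, ← Real.rpow_sub_one (hpos i).ne', hexp]
  calc ∑ i : Fin k, (((i : ℕ) : ℝ) + 1) ^ ρ / d i ≤ ∑ i, S ^ ρ * d i ^ (-t) :=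
        sum_le_sum fun i _ => hterm i
    _ = S ^ (ρ + 1) := by
      rw [← mul_sum, Real.rpow_add' hS (by positivity), Real.rpow_one]

end MonotoneSequence

theorem Jfun_eq_sum_orderEmbOfFin (ρ : ℝ) (n : ℕ) :
    Jfun ρ n = ∑ i : Fin _, (((i : ℕ) : ℝ) + 1) ^ ρ / (n.divisors.orderEmbOfFin rfl i : ℝ) := by
  rw [Jfun, ← Fin.sum_univ_eq_sum_range]
  refine sum_congr rfl fun i _ => ?_
  rw [List.getD_eq_getElem _ _ (by simp), orderEmbOfFin_apply]
  rfl

theorem Finset.sum_eq_sum_orderEmbOfFin {M : Type*} [AddCommMonoid M] {α : Type*} [LinearOrder α]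
    (s : Finset α) (f : α → M) : ∑ a ∈ s, f a = ∑ i, f (s.orderEmbOfFin rfl i) := by
  conv_lhs => rw [← map_orderEmbOfFin_univ s rfl]
  exact sum_map _ _ _

theorem Jfun_le_sum_divisors_rpow (n : ℕ) {ρ : ℝ} (hρ : 0 ≤ ρ) :
    Jfun ρ n ≤ (∑ d ∈ n.divisors, (d : ℝ) ^ (-(1 / (ρ + 1)))) ^ (ρ + 1) := by
  rw [Jfun_eq_sum_orderEmbOfFin, sum_eq_sum_orderEmbOfFin n.divisors]
  refine Monotone.sum_succ_rpow_div_le (fun i j hij => ?_) (fun i => ?_) hρ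
  · exact Nat.cast_le.2 ((n.divisors.orderEmbOfFin rfl).monotone hij)
  · exact Nat.cast_pos.2 (Nat.pos_of_mem_divisors (orderEmbOfFin_mem _ _ i))

namespace ArithmeticFunction

-- The case split is needed since an arithmetic function vanishes at `0`, while `(0 : ℝ) ^ 0 = 1`.
noncomputable def rpow (s : ℝ) : ArithmeticFunction ℝ :=
  ⟨fun n => if n = 0 then 0 else (n : ℝ) ^ s, if_pos rfl⟩

theorem rpow_apply_of_ne_zero {s : ℝ} {n : ℕ} (hn : n ≠ 0) : rpow s n = (n : ℝ) ^ s :=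
  if_neg hn

theorem isMultiplicative_rpow (s : ℝ) : (rpow s).IsMultiplicative := by
  refine IsMultiplicative.iff_ne_zero.2 ⟨by simp [rpow_apply_of_ne_zero], fun hm hn _ => ?_⟩
  rw [rpow_apply_of_ne_zero (mul_ne_zero hm hn), rpow_apply_of_ne_zero hm,
    rpow_apply_of_ne_zero hn, Nat.cast_mul, Real.mul_rpow (Nat.cast_nonneg _) (Nat.cast_nonneg _)]

end ArithmeticFunction

open ArithmeticFunction in
theorem eta_eq_sum_divisors {n : ℕ} (hn : Squarefree n) (t : ℝ) :
    eta n t = ∑ d ∈ n.divisors, (d : ℝ) ^ (-(1 / t)) := by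
  calc eta n t = ∏ p ∈ n.primeFactors, (1 + rpow (-(1 / t)) p) :=
        prod_congr rfl fun p hp => by
          rw [rpow_apply_of_ne_zero (Nat.prime_of_mem_primeFactors hp).ne_zero]
    _ = ∑ d ∈ n.divisors, rpow (-(1 / t)) d :=
        (isMultiplicative_rpow _).prodPrimeFactors_one_add_of_squarefree hn
    _ = ∑ d ∈ n.divisors, (d : ℝ) ^ (-(1 / t)) :=
        sum_congr rfl fun d hd => rpow_apply_of_ne_zero (Nat.pos_of_mem_divisors hd).ne'

theorem stmt11_general (ρ : ℕ) (n : ℕ) (hsf : Squarefree n) :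
    Jfun (ρ : ℝ) n ≤ eta n ((ρ : ℝ) + 1) ^ (ρ + 1) := by
  rw [eta_eq_sum_divisors hsf, ← Real.rpow_natCast, Nat.cast_add_one]
  exact Jfun_le_sum_divisors_rpow n ρ.cast_nonneg

theorem stmt11 (ρ : ℕ) (n : ℕ) (hn : 1 ≤ n) (hsf : Squarefree n) :
    Jfun (ρ : ℝ) n ≤ eta n ((ρ : ℝ) + 1) ^ (ρ + 1) :=
  stmt11_general ρ n hsf
end

section
/- Let n ≥ 1 be a squarefree integer with ω(n) = k, and let e_1 < ⋯ < e_{2^k} be the increasing sequence of divisors of n_k and d_1 < ⋯ < d_{2^k} the increasing sequence of divisors of n. Then e_i ≤ d_i for every i = 1, …, 2^k; consequently 𝒥_ρ(n) ≤ 𝒥_ρ(n_k) for every real ρ ≥ 0. -/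
open Finset


lemma card_filter_eq_length_filter (S : Finset ℕ) (x : ℕ) :
    (S.filter (· ≤ x)).card = ((S.sort (· ≤ ·)).filter (fun y => decide (y ≤ x))).length := by
  rw [Finset.card_def, Finset.filter_val, ← Finset.sort_eq (s := S) (r := (· ≤ ·)), Multiset.filter_coe,
    Multiset.coe_card]

lemma sort_getD_le_iff (S : Finset ℕ) {i : ℕ} (hi : i < S.card) (x : ℕ) :
    (S.sort (· ≤ ·)).getD i 0 ≤ x ↔ i < (S.filter (· ≤ x)).card := by
  set l := S.sort (· ≤ ·) with hl
  have hlen : l.length = S.card := Finset.length_sort _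
  have hil : i < l.length := by omega
  have hsorted : l.Pairwise (· ≤ ·) := Finset.pairwise_sort _ _
  have hmono : ∀ a b : ℕ, (hab : a ≤ b) → (hb : b < l.length) → l[a]'(by omega) ≤ l[b] := by
    intro a b hab hb
    rcases eq_or_lt_of_le hab with h | h
    · subst h; rfl
    · exact List.pairwise_iff_get.mp hsorted ⟨a, by omega⟩ ⟨b, hb⟩ h
  rw [card_filter_eq_length_filter, List.getD_eq_getElem l 0 hil]
  constructor
  · intro h
    have htake : (l.take (i+1)).filter (fun y => decide (y ≤ x)) = l.take (i+1) := by
      apply List.filter_eq_self.mpr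
      intro a ha
      have := List.mem_take_iff_getElem.mp ha
      obtain ⟨j, hj, rfl⟩ := this
      have hji : j < i + 1 := by omega
      simpa using le_trans (hmono j i (by omega) hil) h
    have : l.filter (fun y => decide (y ≤ x)) =
        (l.take (i+1)).filter (fun y => decide (y ≤ x)) ++
        (l.drop (i+1)).filter (fun y => decide (y ≤ x)) := by
      rw [← List.filter_append, List.take_append_drop]
    rw [this, List.length_append, htake, List.length_take]
    omega
  · intro h
    by_contra hx
    push_neg at hx
    have hdrop : (l.drop i).filter (fun y => decide (y ≤ x)) = [] := by
      apply List.filter_eq_nil_iff.mpr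
      intro a ha
      obtain ⟨j, hj, rfl⟩ := List.mem_drop_iff_getElem.mp ha
      -- hj?
      have : l[i] ≤ l[i + j]'(by omega) := hmono i (i+j) (by omega) (by omega)
      simpa using lt_of_lt_of_le hx this
    have : l.filter (fun y => decide (y ≤ x)) =
        (l.take i).filter (fun y => decide (y ≤ x)) ++
        (l.drop i).filter (fun y => decide (y ≤ x)) := by
      rw [← List.filter_append, List.take_append_drop]
    rw [this, List.length_append, hdrop] at h
    have := List.length_filter_le (fun y => decide (y ≤ x)) (l.take i)
    simp [List.length_take] at this h
    omega

lemma sorted_dominate (A B : Finset ℕ) (hcard : A.card = B.card) (g : ℕ → ℕ)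
    (hinj : Set.InjOn g A) (hmaps : ∀ a ∈ A, g a ∈ B) (hle : ∀ a ∈ A, a ≤ g a)
    {i : ℕ} (hi : i < A.card) :
    (A.sort (· ≤ ·)).getD i 0 ≤ (B.sort (· ≤ ·)).getD i 0 := by
  set x := (B.sort (· ≤ ·)).getD i 0 with hx
  have hiB : i < B.card := hcard ▸ hi
  have h1 : i < (B.filter (· ≤ x)).card := (sort_getD_le_iff B hiB x).mp le_rfl
  have himg : Finset.image g A = B := by
    apply Finset.eq_of_subset_of_card_le
    · intro b hb
      obtain ⟨a, ha, rfl⟩ := Finset.mem_image.mp hb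
      exact hmaps a ha
    · rw [Finset.card_image_of_injOn hinj, hcard]
  have hsub : B.filter (· ≤ x) ⊆ Finset.image g (A.filter (· ≤ x)) := by
    intro b hb
    obtain ⟨hbB, hbx⟩ := Finset.mem_filter.mp hb
    obtain ⟨a, ha, rfl⟩ := Finset.mem_image.mp (himg ▸ hbB)
    exact Finset.mem_image.mpr ⟨a, Finset.mem_filter.mpr ⟨ha, le_trans (hle a ha) hbx⟩, rfl⟩
  have h2 : (B.filter (· ≤ x)).card ≤ (A.filter (· ≤ x)).card :=
    le_trans (Finset.card_le_card hsub) (Finset.card_image_le)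
  exact (sort_getD_le_iff A hi x).mpr (lt_of_lt_of_le h1 h2)

lemma squarefree_prod_primes (s : Finset ℕ) (hs : ∀ p ∈ s, p.Prime) :
    Squarefree (∏ p ∈ s, p) := by
  induction s using Finset.induction with
  | empty => simpa using squarefree_one
  | @insert p s hns ih =>
    rw [Finset.prod_insert hns]
    rw [Nat.squarefree_mul_iff]
    refine ⟨?_, (hs p (Finset.mem_insert_self p s)).squarefree,
      ih fun q hq => hs q (Finset.mem_insert_of_mem hq)⟩
    apply Nat.Coprime.prod_right
    intro q hq
    exact (Nat.coprime_primes (hs p (Finset.mem_insert_self p s))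
      (hs q (Finset.mem_insert_of_mem hq))).mpr (fun h => hns (h ▸ hq))

lemma eq_prod_filter_of_dvd_prod_primes (s : Finset ℕ) (hs : ∀ p ∈ s, p.Prime)
    {d : ℕ} (hd : d ∣ ∏ p ∈ s, p) : d = ∏ p ∈ s.filter (· ∣ d), p := by
  have hne : (∏ p ∈ s, p) ≠ 0 := Finset.prod_ne_zero_iff.mpr fun p hp => (hs p hp).ne_zero
  have hdne : d ≠ 0 := fun h => hne (Nat.eq_zero_of_zero_dvd (h ▸ hd))
  have hdsq : Squarefree d := (squarefree_prod_primes s hs).squarefree_of_dvd hd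
  have hpf : d.primeFactors = s.filter (· ∣ d) := by
    ext p
    simp only [Nat.mem_primeFactors, Finset.mem_filter]
    constructor
    · rintro ⟨hp, hpd, -⟩
      refine ⟨?_, hpd⟩
      have : p ∣ ∏ q ∈ s, q := hpd.trans hd
      obtain ⟨q, hq, hpq⟩ := (Nat.Prime.prime hp).exists_mem_finset_dvd this
      rwa [((hs q hq).dvd_iff_eq hp.ne_one).mp hpq] at hq
    · rintro ⟨hp, hpd⟩
      exact ⟨hs p hp, hpd, hdne⟩
  conv_lhs => rw [← Nat.prod_primeFactors_of_squarefree hdsq]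
  rw [hpf]

lemma divisors_prod_primes (s : Finset ℕ) (hs : ∀ p ∈ s, p.Prime) :
    (∏ p ∈ s, p).divisors = s.powerset.image (fun t => ∏ p ∈ t, p) := by
  have hne : (∏ p ∈ s, p) ≠ 0 := Finset.prod_ne_zero_iff.mpr fun p hp => (hs p hp).ne_zero
  ext d
  simp only [Nat.mem_divisors, Finset.mem_image, Finset.mem_powerset]
  constructor
  · rintro ⟨hd, -⟩
    exact ⟨s.filter (· ∣ d), Finset.filter_subset _ _,
      (eq_prod_filter_of_dvd_prod_primes s hs hd).symm⟩
  · rintro ⟨t, hts, rfl⟩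
    exact ⟨Finset.prod_dvd_prod_of_subset _ _ _ hts, hne⟩

lemma card_divisors_prod_primes (s : Finset ℕ) (hs : ∀ p ∈ s, p.Prime) :
    (∏ p ∈ s, p).divisors.card = 2 ^ s.card := by
  rw [divisors_prod_primes s hs, Finset.card_image_of_injOn, Finset.card_powerset]
  intro t ht u hu h
  simp only [Finset.coe_powerset, Set.mem_preimage, Set.mem_powerset_iff,
    Finset.coe_subset] at ht hu
  have ht' := Nat.primeFactors_prod (fun p hp => hs p (ht hp))
  have hu' := Nat.primeFactors_prod (fun p hp => hs p (hu hp))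
  simp only at h
  rw [← ht', ← hu', h]

lemma nth_prime_le_orderEmbOfFin (P : Finset ℕ) (hP : ∀ p ∈ P, p.Prime) {k : ℕ}
    (hk : P.card = k) (j : Fin k) :
    Nat.nth Nat.Prime j ≤ P.orderEmbOfFin hk j := by
  set f := P.orderEmbOfFin hk
  have hfj : (f j).Prime := hP _ (Finset.orderEmbOfFin_mem P hk j)
  have hcount : (j : ℕ) ≤ Nat.count Nat.Prime (f j) := by
    rw [Nat.count_eq_card_filter_range]
    have hjk : (j : ℕ) ≤ k := j.2.le
    have := Finset.card_le_card_of_injOn (fun m => if h : m < k then f ⟨m, h⟩ else 0)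
      (s := Finset.range j) (t := (Finset.range (f j)).filter Nat.Prime)
      (fun m hm => by
        have hmj : m < (j : ℕ) := Finset.mem_range.mp hm
        have hmk : m < k := by omega
        simp only [dif_pos hmk]
        refine Finset.mem_filter.mpr ⟨Finset.mem_range.mpr ?_,
          hP _ (Finset.orderEmbOfFin_mem P hk _)⟩
        exact (P.orderEmbOfFin hk).strictMono (show (⟨m, hmk⟩ : Fin k) < j by
          simpa [Fin.lt_def] using hmj)
      )
      (fun a ha b hb hab => by
        have haj : a < (j : ℕ) := Finset.mem_range.mp ha
        have hbj : b < (j : ℕ) := Finset.mem_range.mp hb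
        have hak : a < k := by omega
        have hbk : b < k := by omega
        simp only [dif_pos hak, dif_pos hbk] at hab
        have := (P.orderEmbOfFin hk).injective hab
        simpa [Fin.mk.injEq] using this)
    simpa using this
  calc Nat.nth Nat.Prime j ≤ Nat.nth Nat.Prime (Nat.count Nat.Prime (f j)) :=
        Nat.nth_monotone Nat.infinite_setOf_prime hcount
    _ = f j := Nat.nth_count hfj


/-- `n_k`: the product of the first `k` primes. -/
noncomputable def primor (k : ℕ) : ℕ := ∏ i ∈ Finset.range k, Nat.nth Nat.Prime i

/-- If `n` is squarefree with `ω(n) = k`, then the `i`-th divisor (in increasing order) of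
`n_k` is at most the `i`-th divisor of `n`; consequently `𝒥_ρ(n) ≤ 𝒥_ρ(n_k)` for all `ρ ≥ 0`. -/
theorem stmt12 (n : ℕ) (hn : 1 ≤ n) (hsf : Squarefree n) (k : ℕ)
    (hk : n.primeFactors.card = k) :
    (∀ i < (primor k).divisors.card,
      ((primor k).divisors.sort (· ≤ ·)).getD i 0 ≤ (n.divisors.sort (· ≤ ·)).getD i 0) ∧
    (∀ ρ : ℝ, 0 ≤ ρ → Jfun ρ n ≤ Jfun ρ (primor k)) := by
  have hn0 : n ≠ 0 := by omega
  set P := n.primeFactors with hP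
  have hPprime : ∀ p ∈ P, p.Prime := fun p hp => Nat.prime_of_mem_primeFactors hp
  have hnprod : ∏ p ∈ P, p = n := Nat.prod_primeFactors_of_squarefree hsf
  set q : ℕ → ℕ := Nat.nth Nat.Prime with hq
  have hqs : StrictMono q := Nat.nth_strictMono Nat.infinite_setOf_prime
  have hqprime : ∀ i, (q i).Prime := Nat.prime_nth_prime
  set Q : Finset ℕ := (Finset.range k).image q with hQ
  have hQcard : Q.card = k := by
    rw [hQ, Finset.card_image_of_injective _ hqs.injective, Finset.card_range]
  have hQprime : ∀ p ∈ Q, p.Prime := by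
    intro p hp
    obtain ⟨m, -, rfl⟩ := Finset.mem_image.mp hp
    exact hqprime m
  have hprimor : primor k = ∏ p ∈ Q, p := by
    rw [primor, hQ, Finset.prod_image]
    intro a _ b _ h; exact hqs.injective h
  have hprimor0 : primor k ≠ 0 := by
    rw [hprimor]; exact Finset.prod_ne_zero_iff.mpr fun p hp => (hQprime p hp).ne_zero
  set f : Fin k → ℕ := fun j => P.orderEmbOfFin hk j with hf
  have hfP : ∀ j, f j ∈ P := fun j => Finset.orderEmbOfFin_mem P hk j
  -- the map φ
  set φ : ℕ → ℕ := fun p => if h : Nat.count Nat.Prime p < k then f ⟨Nat.count Nat.Prime p, h⟩ else p with hφ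
  have hcq : ∀ m : ℕ, Nat.count Nat.Prime (q m) = m :=
    Nat.count_nth_of_infinite Nat.infinite_setOf_prime
  have hφq : ∀ m : ℕ, (hm : m < k) → φ (q m) = f ⟨m, hm⟩ := by
    intro m hm
    simp only [hφ, hcq m, dif_pos hm]
  have hφmem : ∀ p ∈ Q, φ p ∈ P := by
    intro p hp
    obtain ⟨m, hm, rfl⟩ := Finset.mem_image.mp hp
    rw [hφq m (Finset.mem_range.mp hm)]
    exact hfP _
  have hφle : ∀ p ∈ Q, p ≤ φ p := by
    intro p hp
    obtain ⟨m, hm, rfl⟩ := Finset.mem_image.mp hp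
    rw [hφq m (Finset.mem_range.mp hm)]
    simpa [hq, hf] using nth_prime_le_orderEmbOfFin P hPprime hk ⟨m, Finset.mem_range.mp hm⟩
  have hφinj : Set.InjOn φ Q := by
    intro a ha b hb hab
    obtain ⟨ma, hma, rfl⟩ := Finset.mem_image.mp (by exact_mod_cast ha)
    obtain ⟨mb, hmb, rfl⟩ := Finset.mem_image.mp (by exact_mod_cast hb)
    rw [hφq ma (Finset.mem_range.mp hma), hφq mb (Finset.mem_range.mp hmb)] at hab
    have := (P.orderEmbOfFin hk).injective hab
    have : ma = mb := by simpa [Fin.mk.injEq] using this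
    rw [this]
  -- the divisor map g
  set g : ℕ → ℕ := fun d => ∏ p ∈ Q.filter (· ∣ d), φ p with hg
  set A := (primor k).divisors with hA
  set B := n.divisors with hB
  have hAcard : A.card = 2 ^ k := by
    rw [hA, hprimor, card_divisors_prod_primes Q hQprime, hQcard]
  have hBcard : B.card = 2 ^ k := by
    rw [hB, ← hnprod, card_divisors_prod_primes P hPprime, hk]
  have hcardAB : A.card = B.card := by rw [hAcard, hBcard]
  have hrep : ∀ d ∈ A, d = ∏ p ∈ Q.filter (· ∣ d), p := by
    intro d hd
    have hdvd : d ∣ ∏ p ∈ Q, p := hprimor ▸ (Nat.mem_divisors.mp hd).1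
    exact eq_prod_filter_of_dvd_prod_primes Q hQprime hdvd
  have himgprod : ∀ d : ℕ, g d = ∏ p ∈ (Q.filter (· ∣ d)).image φ, p := by
    intro d
    rw [Finset.prod_image]
    intro a ha b hb hab
    exact hφinj (Finset.filter_subset _ _ ha) (Finset.filter_subset _ _ hb) hab
  have hle : ∀ d ∈ A, d ≤ g d := by
    intro d hd
    calc d = ∏ p ∈ Q.filter (· ∣ d), p := hrep d hd
      _ ≤ ∏ p ∈ Q.filter (· ∣ d), φ p :=
        Finset.prod_le_prod' fun p hp => hφle p (Finset.filter_subset _ _ hp)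
  have hmaps : ∀ d ∈ A, g d ∈ B := by
    intro d hd
    rw [hB, Nat.mem_divisors]
    refine ⟨?_, hn0⟩
    rw [himgprod d, ← hnprod]
    apply Finset.prod_dvd_prod_of_subset
    intro p hp
    obtain ⟨a, ha, rfl⟩ := Finset.mem_image.mp hp
    exact hφmem a (Finset.filter_subset _ _ ha)
  have hinj : Set.InjOn g A := by
    intro d hd e he hde
    have hdA : d ∈ A := hd
    have heA : e ∈ A := he
    have himg : (Q.filter (· ∣ d)).image φ = (Q.filter (· ∣ e)).image φ := by
      have h1 := himgprod d
      have h2 := himgprod e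
      have hde' : (∏ p ∈ (Q.filter (· ∣ d)).image φ, p) = (∏ p ∈ (Q.filter (· ∣ e)).image φ, p) := by
        rw [← h1, ← h2]; exact hde
      have hprimes1 : ∀ p ∈ (Q.filter (· ∣ d)).image φ, p.Prime := by
        intro p hp
        obtain ⟨a, ha, rfl⟩ := Finset.mem_image.mp hp
        exact hPprime _ (hφmem a (Finset.filter_subset _ _ ha))
      have hprimes2 : ∀ p ∈ (Q.filter (· ∣ e)).image φ, p.Prime := by
        intro p hp
        obtain ⟨a, ha, rfl⟩ := Finset.mem_image.mp hp
        exact hPprime _ (hφmem a (Finset.filter_subset _ _ ha))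
      rw [← Nat.primeFactors_prod hprimes1, ← Nat.primeFactors_prod hprimes2, hde']
    have hTT : Q.filter (· ∣ d) = Q.filter (· ∣ e) := by
      ext p
      constructor
      · intro hp
        have : φ p ∈ (Q.filter (· ∣ e)).image φ := himg ▸ Finset.mem_image_of_mem φ hp
        obtain ⟨a, ha, hap⟩ := Finset.mem_image.mp this
        have := hφinj (Finset.filter_subset _ _ ha) (Finset.filter_subset _ _ hp) hap
        rwa [← this]
      · intro hp
        have : φ p ∈ (Q.filter (· ∣ d)).image φ := himg ▸ Finset.mem_image_of_mem φ hp
        obtain ⟨a, ha, hap⟩ := Finset.mem_image.mp this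
        have := hφinj (Finset.filter_subset _ _ ha) (Finset.filter_subset _ _ hp) hap
        rwa [← this]
    rw [hrep d hdA, hrep e heA, hTT]
  -- first conjunct
  have main : ∀ i < A.card,
      (A.sort (· ≤ ·)).getD i 0 ≤ (B.sort (· ≤ ·)).getD i 0 := by
    intro i hi
    exact sorted_dominate A B hcardAB g hinj hmaps hle hi
  refine ⟨fun i hi => main i hi, ?_⟩
  -- second conjunct
  intro ρ hρ
  rw [Jfun, Jfun]
  have hBA : B.card = A.card := hcardAB.symm
  rw [show n.divisors = B from rfl, show (primor k).divisors = A from rfl, hBA]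
  apply Finset.sum_le_sum
  intro i hi
  have hiA : i < A.card := Finset.mem_range.mp hi
  have hdom := main i hiA
  set dA := (A.sort (· ≤ ·)).getD i 0 with hdA'
  set dB := (B.sort (· ≤ ·)).getD i 0 with hdB'
  have hdApos : 0 < dA := by
    have hlen : i < (A.sort (· ≤ ·)).length := by rw [Finset.length_sort]; exact hiA
    have : dA ∈ A.sort (· ≤ ·) := by
      rw [hdA', List.getD_eq_getElem _ _ hlen]
      exact List.getElem_mem _
    have : dA ∈ A := (Finset.mem_sort _).mp this
    exact Nat.pos_of_mem_divisors (hA ▸ this)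
  have hnum : (0:ℝ) ≤ ((i : ℝ) + 1) ^ ρ := Real.rpow_nonneg (by positivity) _
  apply div_le_div_of_nonneg_left hnum
  · exact_mod_cast hdApos
  · exact_mod_cast hdom
end

section
/- Let s ≥ 1 and α ≥ 0 be integers. Then R_s(α) = Σ_{v=1}^{s} (-1)^{s-v} · binom(2s, s-v) · binom((α+1)v + s - 1, 2s-1). -/
/-!
Reflecting the second half of a tuple, `y ↦ α - y`, turns `∑ x = ∑ y` into `∑ x + ∑ y = s α`, so
`R_s(α)` is the coefficient of `X^{sα}` in `(1 + X + ⋯ + X^α)^{2s} = (1 - X^{α+1})^{2s} (1 - X)^{-2s}`.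
Expanding the first factor binomially gives an alternating sum over `j`, in which only `j < s`
contributes; the substitution `v = s - j` gives the stated formula.
-/

open Finset

/-- `R_s(α)`: the number of `2s`-tuples `(α_1,…,α_{2s}) ∈ {0,…,α}^{2s}` with
`α_1 + ⋯ + α_s = α_{s+1} + ⋯ + α_{2s}`. -/
def Rfun (s α : ℕ) : ℕ :=
  (((Fintype.piFinset fun _ : Fin s => Finset.range (α+1)) ×ˢ
      (Fintype.piFinset fun _ : Fin s => Finset.range (α+1))).filter
    fun p => ∑ i, p.1 i = ∑ i, p.2 i).card

open PowerSeries

lemma sum_pow_pow_eq_sum_piFinset {R : Type*} [CommSemiring R] (a : R) (t : Finset ℕ) (n : ℕ) :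
    (∑ i ∈ t, a ^ i) ^ n = ∑ x ∈ Fintype.piFinset fun _ : Fin n => t, a ^ ∑ i, x i := by
  rw [← Fin.prod_const, prod_univ_sum]
  simp only [prod_pow_eq_pow_sum]

lemma coeff_sum_X_pow {R ι : Type*} [Semiring R] (S : Finset ι) (f : ι → ℕ) (m : ℕ) :
    coeff m (∑ x ∈ S, X ^ f x : R⟦X⟧) = #{x ∈ S | f x = m} := by
  simp only [map_sum, coeff_X_pow, eq_comm (a := m)]
  exact sum_boole _ _

lemma sum_tsub_add_sum {ι : Type*} [Fintype ι] {α : ℕ} {y : ι → ℕ} (hy : ∀ i, y i ≤ α) :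
    ∑ i, (α - y i) + ∑ i, y i = Fintype.card ι * α := by
  rw [← sum_add_distrib]
  simp [Nat.sub_add_cancel (hy _)]

lemma Rfun_eq_card_sum_add_sum_eq (s α : ℕ) :
    Rfun s α = #{p ∈ (Fintype.piFinset fun _ : Fin s => range (α + 1)) ×ˢ
      (Fintype.piFinset fun _ : Fin s => range (α + 1)) | ∑ i, p.1 i + ∑ i, p.2 i = s * α} := by
  have hP {y : Fin s → ℕ} (hy : ∀ i, y i < α + 1) : ∑ i, (α - y i) + ∑ i, y i = s * α := by
    simpa using sum_tsub_add_sum (fun i => Nat.le_of_lt_succ (hy i))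
  refine card_nbij' (fun p => (p.1, fun i => α - p.2 i)) (fun p => (p.1, fun i => α - p.2 i))
    ?_ ?_ ?_ ?_
  all_goals
    rintro ⟨x, y⟩
    simp only [coe_filter, mem_product, Fintype.mem_piFinset, mem_range, Set.mem_ofPred_eq]
    rintro ⟨⟨hx, hy⟩, hsum⟩
  all_goals have := hP hy
  · exact ⟨⟨hx, fun i => by omega⟩, by omega⟩
  · exact ⟨⟨hx, fun i => by omega⟩, by omega⟩
  all_goals exact Prod.ext rfl (funext fun i => Nat.sub_sub_self (Nat.le_of_lt_succ (hy i)))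

lemma geom_sum_X_pow_eq_mul_invOneSubPow {R : Type*} [CommRing R] (d n : ℕ) :
    (∑ i ∈ range d, X ^ i : R⟦X⟧) ^ n = (1 - X ^ d) ^ n * (invOneSubPow R n).val := by
  have h := one_sub_pow_add_mul_invOneSubPow_val_eq_one_sub_pow R 0 n
  rw [zero_add, pow_zero] at h
  rw [← mul_neg_geom_sum, mul_pow, mul_right_comm, h, one_mul]

lemma coeff_one_sub_X_pow_pow_mul_invOneSubPow {R : Type*} [CommRing R] {n : ℕ} (hn : 0 < n)
    (d m : ℕ) :
    coeff m ((1 - X ^ d) ^ n * (invOneSubPow R n).val) = ∑ j ∈ range (n + 1),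
      (-1) ^ j * (n.choose j : R) *
        if d * j ≤ m then ((n - 1 + (m - d * j)).choose (n - 1) : R) else 0 := by
  have h : (1 - X ^ d : R⟦X⟧) ^ n =
      ∑ j ∈ range (n + 1), C ((-1) ^ j * n.choose j : R) * X ^ (d * j) := by
    rw [sub_eq_neg_add, add_pow]
    refine sum_congr rfl fun j _ => ?_
    rw [one_pow, mul_one, neg_pow, ← pow_mul, map_mul, map_pow, map_neg, map_one, map_natCast]
    ring
  rw [h, sum_mul, map_sum]
  refine sum_congr rfl fun j _ => ?_
  rw [mul_assoc, coeff_C_mul, coeff_X_pow_mul',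
    invOneSubPow_val_eq_mk_sub_one_add_choose_of_pos _ _ hn]
  split_ifs <;> simp [coeff_mk]

lemma Rfun_eq_coeff (s α : ℕ) :
    (Rfun s α : ℤ) = coeff (s * α) ((∑ i ∈ range (α + 1), X ^ i : ℤ⟦X⟧) ^ (2 * s)) := by
  rw [two_mul, pow_add, sum_pow_pow_eq_sum_piFinset, sum_mul_sum, ← sum_product']
  simp only [← pow_add]
  rw [coeff_sum_X_pow, Rfun_eq_card_sum_add_sum_eq]

theorem stmt14 (s α : ℕ) (hs : 1 ≤ s) :
    (Rfun s α : ℤ) = ∑ v ∈ Finset.Icc 1 s,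
      (-1) ^ (s-v) * (Nat.choose (2*s) (s-v) : ℤ) *
        (Nat.choose ((α+1)*v + s - 1) (2*s-1) : ℤ) := by
  rw [Rfun_eq_coeff, geom_sum_X_pow_eq_mul_invOneSubPow,
    coeff_one_sub_X_pow_pow_mul_invOneSubPow (by omega)]
  have hαs : (α + 1) * s = s * α + s := by ring
  have hlarge (j : ℕ) (hj : s ≤ j) : ¬ (α + 1) * j ≤ s * α := by
    have := Nat.mul_le_mul_left (α + 1) hj
    omega
  rw [← sum_subset (range_subset_range.2 (by omega : s ≤ 2 * s + 1)) fun j _ hj => by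
    rw [if_neg (hlarge j (by simpa using hj)), mul_zero]]
  refine sum_nbij' (s - ·) (s - ·) ?_ ?_ ?_ ?_ fun j hj => ?_
  iterate 4 (simp only [mem_range, mem_Icc]; omega)
  have hj : j < s := mem_range.1 hj
  have := Nat.mul_le_mul_left (α + 1) hj.le
  have := Nat.mul_sub (α + 1) s j
  rw [Nat.sub_sub_self hj.le]
  split_ifs with hfit
  · congr 3
    omega
  · rw [Nat.choose_eq_zero_of_lt (n := (α + 1) * (s - j) + s - 1) (by omega)]
    simp
end

section
/- Let s ≥ 1 and 0 ≤ v ≤ s be integers. Then Σ_{i ≥ 0, s-v-2i ≥ 0} ( s! / (i!·(v+i)!·(s-v-2i)!) ) · 2^{s-v-2i} = binom(2s, s-v). -/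
open Finset

open Polynomial in
lemma coeff_one_add_two_X_pow' (n k : ℕ) :
    ((1 + 2 * X : Polynomial ℕ) ^ n).coeff k = n.choose k * 2 ^ k := by
  have hC : ∀ m : ℕ, (C m : Polynomial ℕ) = (m : Polynomial ℕ) := fun m => by
    simp
  have h : (1 + 2 * X : Polynomial ℕ) ^ n = ∑ j ∈ range (n + 1),
      C (2 ^ j * n.choose j) * X ^ j := by
    rw [add_comm, add_pow]
    refine Finset.sum_congr rfl fun j hj => ?_
    rw [hC]
    push_cast
    ring
  rw [h, finset_sum_coeff]
  simp only [coeff_C_mul, coeff_X_pow]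
  rcases le_or_gt k n with hk | hk
  · rw [Finset.sum_eq_single k]
    · simp [mul_comm]
    · intro b _ hb; simp [Ne.symm hb]
    · intro h; exact absurd (Finset.mem_range.2 (Nat.lt_succ_of_le hk)) h
  · rw [Finset.sum_eq_zero, Nat.choose_eq_zero_of_lt hk, zero_mul]
    intro b hb
    have hbk : k ≠ b := by have := Finset.mem_range.1 hb; omega
    simp [hbk]

/-- `∑_i binom(s; i, v+i, s-v-2i) · 2^{s-v-2i} = binom(2s, s-v)`, the sum being over all
integers `i ≥ 0` with `s - v - 2i ≥ 0`. -/
theorem stmt15 (s v : ℕ) (hs : 1 ≤ s) (hv : v ≤ s) :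
    ∑ i ∈ (Finset.range (s+1)).filter (fun i => v + 2*i ≤ s),
      (s.factorial / (i.factorial * (v+i).factorial * (s - v - 2*i).factorial)) *
        2 ^ (s - v - 2*i)
      = Nat.choose (2*s) (s - v) := by
  classical
  open Polynomial in
  have hC : ∀ m : ℕ, (C m : Polynomial ℕ) = (m : Polynomial ℕ) := fun m => by
    simp
  have key : ∀ i ∈ (Finset.range (s+1)).filter (fun i => v + 2*i ≤ s),
      (s.factorial / (i.factorial * (v+i).factorial * (s - v - 2*i).factorial)) *
        2 ^ (s - v - 2*i)
      = s.choose i * ((s-i).choose (s - v - 2*i) * 2 ^ (s - v - 2*i)) := by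
    intro i hi
    obtain ⟨hi1, hi2⟩ := Finset.mem_filter.1 hi
    have hi1' := Finset.mem_range.1 hi1
    have h1 : s.choose i * i.factorial * (s-i).factorial = s.factorial :=
      Nat.choose_mul_factorial_mul_factorial (by omega)
    have h2 : (s-i).choose (s-v-2*i) * (s-v-2*i).factorial *
        ((s-i)-(s-v-2*i)).factorial = (s-i).factorial :=
      Nat.choose_mul_factorial_mul_factorial (by omega)
    have h3 : (s-i)-(s-v-2*i) = v+i := by omega
    rw [h3] at h2
    have hd : s.factorial / (i.factorial * (v+i).factorial * (s - v - 2*i).factorial)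
        = s.choose i * (s-i).choose (s-v-2*i) := by
      apply Nat.div_eq_of_eq_mul_left
      · exact Nat.mul_pos (Nat.mul_pos (Nat.factorial_pos _) (Nat.factorial_pos _))
          (Nat.factorial_pos _)
      · calc s.factorial = s.choose i * i.factorial * (s-i).factorial := h1.symm
          _ = (s.choose i * i.factorial) *
              ((s-i).choose (s-v-2*i) * (s-v-2*i).factorial * (v+i).factorial) := by
            rw [h2]
          _ = s.choose i * (s-i).choose (s-v-2*i) *
              (i.factorial * (v+i).factorial * (s-v-2*i).factorial) := by ring
    rw [hd]; ring
  rw [Finset.sum_congr rfl key]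
  have P : ((1+X : Polynomial ℕ))^(2*s)
      = ∑ i ∈ Finset.range (s+1), (X^2)^i * (1+2*X)^(s-i) * C (s.choose i) := by
    rw [pow_mul]
    have h : ((1+X : Polynomial ℕ))^2 = X^2 + (1+2*X) := by ring
    rw [h, add_pow]
    exact Finset.sum_congr rfl fun i hi => by rw [hC]
  have crhs : ∀ i ∈ Finset.range (s+1),
      ((X^2)^i * (1+2*X) ^ (s-i) * C (s.choose i)).coeff (s-v)
      = if v + 2*i ≤ s then s.choose i * ((s-i).choose (s-v-2*i) * 2^(s-v-2*i)) else 0 := by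
    intro i hi
    rw [coeff_mul_C, ← pow_mul, coeff_X_pow_mul', coeff_one_add_two_X_pow']
    by_cases h : v + 2*i ≤ s
    · rw [if_pos (by omega), if_pos h]; ring
    · rw [if_neg (by omega), if_neg h, zero_mul]
  have hcoeff := congrArg (fun p => Polynomial.coeff p (s - v)) P
  simp only [finset_sum_coeff, coeff_one_add_X_pow, Nat.cast_id] at hcoeff
  rw [Finset.sum_congr rfl crhs] at hcoeff
  rw [Finset.sum_filter]
  exact hcoeff.symm
end

section
/- Let s ≥ 1 and 0 ≤ r ≤ s-1 be integers, and set c_r := Σ_{v=1}^{s} (-1)^{v-1} · binom(2s, s-v) · v^{2r+1}. Then (-1)^r · c_r > 0, i.e. the sign of c_r is (-1)^r. -/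
open Finset

open Polynomial Finset

namespace S17

noncomputable def E : ℕ → ℤ[X]
  | 0 => 1
  | n+1 => (1 + (n : ℤ[X]) * X) * E n + X * (1 - X) * derivative (E n)

def gam : ℕ → ℕ → ℕ
  | 0, _ => 0
  | 1, k => if k = 0 then 1 else 0
  | (n+2), k => (k+1) * gam (n+1) k +
      (if k = 0 then 0 else (2*n+4-4*k) * gam (n+1) (k-1))

lemma gam_zero' (n k : ℕ) (h : n ≤ 2*k) : gam n k = 0 := by
  induction n generalizing k with
  | zero => rfl
  | succ n ih =>
    match n, h with
    | 0, h =>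
      have : k ≠ 0 := by omega
      simp [gam, this]
    | (n+1), h =>
      show (k+1) * gam (n+1) k + _ = 0
      rcases Nat.eq_zero_or_pos k with hk | hk
      · omega
      · have h1 : gam (n+1) k = 0 := ih k (by omega)
        rcases Nat.lt_or_ge (n+3) (2*k) with h2 | h2
        · have h3 : gam (n+1) (k-1) = 0 := ih (k-1) (by omega)
          simp [h1, h3]
        · have hco : 2*n+4-4*k = 0 := by omega
          have : k ≠ 0 := by omega
          simp [h1, hco, this]

lemma gam_nought (n : ℕ) (hn : 1 ≤ n) : gam n 0 = 1 := by
  induction n with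
  | zero => omega
  | succ n ih =>
    match n with
    | 0 => rfl
    | (m+1) => simp [gam, ih (by omega)]

lemma dOneAdd (m : ℕ) : derivative ((1+X)^m : ℤ[X]) = C (m:ℤ) * (1+X)^(m-1) := by
  rw [derivative_pow]; simp

lemma PT (k m : ℕ) :
    (1 + ((2*k+1+m : ℕ) : ℤ[X]) * X) * (X^k * (1+X)^m)
      + X*(1-X) * derivative (X^k * (1+X)^m)
    = C ((k:ℤ)+1) * (X^k * (1+X)^(m+1)) + C (2*(m:ℤ)) * (X^(k+1) * (1+X)^(m-1)) := by
  rw [derivative_mul, dOneAdd, derivative_X_pow]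
  cases m with
  | zero =>
    cases k with
    | zero => simp
    | succ k' =>
      simp only [Nat.add_sub_cancel, Nat.cast_zero, map_zero, zero_mul, mul_zero, add_zero,
        pow_zero, mul_one, Nat.cast_succ, Nat.cast_mul, Nat.cast_add, Nat.cast_ofNat,
        Nat.cast_one, pow_succ, zero_add, pow_one]
      push_cast
      simp only [map_add, map_one, map_mul, map_ofNat, Polynomial.C_eq_natCast, Polynomial.C_1]
      ring
  | succ m' =>
    cases k with
    | zero =>
      simp only [Nat.add_sub_cancel, Nat.cast_zero, map_zero, zero_mul, mul_zero, add_zero,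
        pow_zero, mul_one, one_mul, zero_add, pow_succ, pow_one]
      push_cast
      simp only [map_add, map_one, map_mul, map_ofNat, Polynomial.C_eq_natCast, Polynomial.C_1]
      ring
    | succ k' =>
      simp only [Nat.add_sub_cancel, pow_succ]
      push_cast
      simp only [map_add, map_one, map_mul, map_ofNat, Polynomial.C_eq_natCast, Polynomial.C_1]
      ring

lemma E_eq (n : ℕ) (hn : 1 ≤ n) :
    E n = ∑ k ∈ range n, C (gam n k : ℤ) * (X^k * (1+X)^(n-1-2*k)) := by
  induction n with
  | zero => omega
  | succ n ih =>
    rcases Nat.eq_zero_or_pos n with rfl | hn'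
    · simp only [E]
      simp [gam]
    · have ihh := ih hn'
      show (1 + (n : ℤ[X]) * X) * E n + X * (1 - X) * derivative (E n) = _
      rw [ihh, derivative_sum, mul_sum, mul_sum, ← sum_add_distrib]
      have step : ∀ k ∈ range n,
          (1 + (n : ℤ[X]) * X) * (C (gam n k : ℤ) * (X^k * (1+X)^(n-1-2*k)))
            + X * (1-X) * derivative (C (gam n k : ℤ) * (X^k * (1+X)^(n-1-2*k)))
          = C (((k:ℤ)+1) * (gam n k : ℤ)) * (X^k * (1+X)^(n-2*k))
            + C (2*((n-1-2*k : ℕ) : ℤ) * (gam n k : ℤ)) * (X^(k+1) * (1+X)^(n-2*k-2)) := by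
        intro k _
        rw [derivative_C_mul]
        by_cases h2 : 2*k+1 ≤ n
        · have hPT := PT k (n-1-2*k)
          have e1 : 2*k+1+(n-1-2*k) = n := by omega
          have e2 : n-1-2*k+1 = n-2*k := by omega
          have e3 : n-1-2*k-1 = n-2*k-2 := by omega
          rw [e1, e2, e3] at hPT
          calc (1 + (n : ℤ[X]) * X) * (C (gam n k : ℤ) * (X^k * (1+X)^(n-1-2*k)))
              + X * (1-X) * (C (gam n k : ℤ) * derivative (X^k * (1+X)^(n-1-2*k)))
              = C (gam n k : ℤ) * ((1 + (n : ℤ[X]) * X) * (X^k * (1+X)^(n-1-2*k))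
                + X * (1-X) * derivative (X^k * (1+X)^(n-1-2*k))) := by ring
            _ = _ := by rw [hPT]; simp only [map_mul, map_add, map_ofNat]; ring
        · have hγ : gam n k = 0 := gam_zero' n k (by omega)
          simp [hγ]
      rw [sum_congr rfl step, sum_add_distrib]
      -- pad first sum with k = n and reindex second sum
      have pad1 : ∑ k ∈ range n, C (((k:ℤ)+1) * (gam n k : ℤ)) * (X^k * (1+X)^(n-2*k))
          = ∑ k ∈ range (n+1), C (((k:ℤ)+1) * (gam n k : ℤ)) * (X^k * (1+X)^(n-2*k)) := by
        rw [sum_range_succ, gam_zero' n n (by omega)]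
        simp
      have pad2 : ∑ k ∈ range n,
            C (2*((n-1-2*k : ℕ) : ℤ) * (gam n k : ℤ)) * (X^(k+1) * (1+X)^(n-2*k-2))
          = ∑ j ∈ range (n+1), C (if j = 0 then 0 else
              2*((n-1-2*(j-1) : ℕ) : ℤ) * (gam n (j-1) : ℤ)) * (X^j * (1+X)^(n-2*j)) := by
        rw [Finset.sum_range_succ']
        simp only [map_zero, zero_mul, add_zero, if_pos]
        apply sum_congr rfl
        intro k _
        simp only [Nat.add_sub_cancel, if_neg (Nat.succ_ne_zero k)]
        have e4 : n - 2*(k+1) = n-2*k-2 := by omega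
        rw [e4]
      rw [pad1, pad2, ← sum_add_distrib]
      apply sum_congr rfl
      intro j _
      have hexp : n + 1 - 1 - 2*j = n - 2*j := by omega
      rw [hexp]
      rw [← add_mul, ← map_add]
      congr 2
      -- γ (n+1) j = (j+1) γ n j + (if ...) as integers
      obtain ⟨m, rfl⟩ : ∃ m, n = m+1 := ⟨n-1, by omega⟩
      cases j with
      | zero => simp [gam]
      | succ j =>
        have hrec : gam (m+1+1) (j+1)
            = (j+2) * gam (m+1) (j+1) + (2*m+4-4*(j+1)) * gam (m+1) j := by
          simp [gam]
        have hco : 2*m+4-4*(j+1) = 2*((m+1)-1-2*j) := by omega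
        rw [if_neg (Nat.succ_ne_zero j), Nat.add_sub_cancel, hrec, hco]
        push_cast
        ring

end S17

namespace S17B
open S17

lemma E_one : E 1 = 1 := by simp [E]

lemma worp_base (N : ℕ) :
    (∑ v ∈ range (N+1), C ((v:ℤ)^1) * X^v) * (1-X)^2
      = X * E 1 + X^(N+1) * (C (N:ℤ) * X - C ((N:ℤ)+1)) := by
  rw [E_one]
  induction N with
  | zero => simp
  | succ N ih =>
    rw [sum_range_succ, add_mul, ih]
    simp only [pow_one]
    push_cast
    simp only [map_add, map_mul, map_one, map_ofNat, C_1, C_eq_natCast]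
    ring

lemma hT (n N : ℕ) :
    (∑ v ∈ range (N+1), C ((v:ℤ)^(n+1)) * X^v)
      = X * derivative (∑ v ∈ range (N+1), C ((v:ℤ)^n) * X^v) := by
  rw [derivative_sum, mul_sum]
  apply sum_congr rfl
  intro v _
  rw [derivative_C_mul, derivative_X_pow]
  cases v with
  | zero => simp
  | succ w =>
    rw [Nat.add_sub_cancel]
    push_cast
    rw [pow_succ]
    simp only [map_add, map_mul, map_one, map_ofNat, C_1, C_eq_natCast]
    ring

lemma worp (n : ℕ) (hn : 1 ≤ n) (N : ℕ) :
    ∃ Rp : ℤ[X], (∑ v ∈ range (N+1), C ((v:ℤ)^n) * X^v) * (1-X)^(n+1)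
      = X * E n + X^(N+1) * Rp := by
  induction n with
  | zero => omega
  | succ n ih =>
    rcases Nat.eq_zero_or_pos n with rfl | hn'
    · exact ⟨_, worp_base N⟩
    · obtain ⟨R, h⟩ := ih hn'
      refine ⟨C ((n:ℤ)+1) * X * R + (1-X)*(C ((N:ℤ)+1) * R) + X*(1-X)* derivative R, ?_⟩
      have hd := congrArg derivative h
      simp only [derivative_mul, derivative_add, derivative_pow, derivative_X_pow,
        derivative_X, derivative_one, derivative_sub, Nat.add_sub_cancel, mul_one] at hd
      rw [hT n N]
      have hE : E (n+1) = (1 + (n : ℤ[X]) * X) * E n + X * (1 - X) * derivative (E n) := rfl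
      rw [hE]
      push_cast at hd ⊢
      simp only [map_add, map_mul, map_one, map_ofNat, C_1, C_eq_natCast] at hd ⊢
      linear_combination (X*(1-X)) * hd + (((n:ℤ[X]))+1) * X * h

noncomputable def Pp (m K : ℕ) : ℤ[X] := (1-X)^(2*m) * (1+X)^(2*K)

noncomputable def Ff (m K : ℕ) : ℤ := (Pp m K).coeff (m+K)

lemma oneSubX_ne : (1 - X : ℤ[X]) ≠ 0 := by
  intro h
  have := congrArg (fun p => Polynomial.coeff p 1) h
  simp [Polynomial.coeff_one] at this

lemma oneAddX_ne : (1 + X : ℤ[X]) ≠ 0 := by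
  intro h
  have := congrArg (fun p => Polynomial.coeff p 1) h
  simp [Polynomial.coeff_one] at this

lemma natDeg_oneSub : (1 - X : ℤ[X]).natDegree = 1 := by
  have : (1 - X : ℤ[X]) = -(X - C 1) := by rw [C_1]; try ring
  rw [this, natDegree_neg, natDegree_X_sub_C]

lemma natDeg_oneAdd : (1 + X : ℤ[X]).natDegree = 1 := by
  have : (1 + X : ℤ[X]) = X + C 1 := by rw [C_1]; try ring
  rw [this, natDegree_X_add_C]

lemma natDeg_Pp (m K : ℕ) : (Pp m K).natDegree = 2*m + 2*K := by
  rw [Pp, natDegree_mul (pow_ne_zero _ oneSubX_ne) (pow_ne_zero _ oneAddX_ne),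
    natDegree_pow, natDegree_pow, natDeg_oneSub, natDeg_oneAdd]
  ring

lemma reverse_pow (p : ℤ[X]) (n : ℕ) : reverse (p^n) = (reverse p)^n := by
  induction n with
  | zero => simp [reverse]
  | succ n ih => rw [pow_succ, reverse_mul_of_domain, ih, pow_succ]

lemma reverse_oneSub : reverse (1 - X : ℤ[X]) = X - 1 := by
  have h1 : (1 - X : ℤ[X]) = C 1 + (-X) := by rw [C_1]; try ring
  rw [h1, reverse_C_add]
  have : reverse (-X : ℤ[X]) = -reverse (X : ℤ[X]) := reverse_neg X
  rw [this]
  have hX : reverse (X : ℤ[X]) = 1 := by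
    rw [show (X:ℤ[X]) = 1 * X by ring, reverse_mul_X]
    first | rfl | simp [reverse]
  rw [hX, natDegree_neg, natDegree_X]
  simp
  ring

lemma reverse_oneAdd : reverse (1 + X : ℤ[X]) = X + 1 := by
  have h1 : (1 + X : ℤ[X]) = C 1 + X := by rw [C_1]; try ring
  rw [h1, reverse_C_add]
  have hX : reverse (X : ℤ[X]) = 1 := by
    rw [show (X:ℤ[X]) = 1 * X by ring, reverse_mul_X]
    first | rfl | simp [reverse]
  rw [hX, natDegree_X]
  simp [add_comm]

lemma reverse_Pp (m K : ℕ) : reverse (Pp m K) = Pp m K := by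
  rw [Pp, reverse_mul_of_domain, reverse_pow, reverse_pow, reverse_oneSub, reverse_oneAdd]
  have h1 : (X - 1 : ℤ[X])^(2*m) = (1-X)^(2*m) := by
    rw [show (X - 1 : ℤ[X]) = -(1 - X) by ring, neg_pow]
    simp [pow_mul]
  have h2 : (X + 1 : ℤ[X])^(2*K) = (1+X)^(2*K) := by ring_nf
  rw [h1, h2]

lemma pal (m K : ℕ) (j : ℕ) (hj : j ≤ 2*m+2*K) :
    (Pp m K).coeff j = (Pp m K).coeff (2*m+2*K - j) := by
  conv_lhs => rw [← reverse_Pp]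
  rw [coeff_reverse, natDeg_Pp, revAt_le (by omega)]

lemma ode (m K : ℕ) :
    (1 - X^2) * derivative (Pp m K)
      = (C ((2*K:ℤ) - 2*m) - C ((2*m+2*K:ℤ)) * X) * Pp m K := by
  rw [Pp, derivative_mul, derivative_pow, derivative_pow]
  have d1 : derivative (1 - X : ℤ[X]) = -1 := by
    rw [derivative_sub, derivative_one, derivative_X]; ring
  have d2 : derivative (1 + X : ℤ[X]) = 1 := by
    rw [derivative_add, derivative_one, derivative_X]; ring
  rw [d1, d2]
  cases m with
  | zero =>
    cases K with
    | zero => simp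
    | succ K' =>
      have e : 2*(K'+1) - 1 = 2*K'+1 := by omega
      rw [e, show 2*(K'+1) = (2*K'+1)+1 by omega]
      push_cast
      simp only [map_add, map_mul, map_one, map_ofNat, map_sub, map_zero, C_1, C_0, C_eq_natCast, Nat.cast_zero, Nat.cast_ofNat, mul_zero, zero_mul]
      ring
  | succ m' =>
    cases K with
    | zero =>
      have e : 2*(m'+1) - 1 = 2*m'+1 := by omega
      rw [e, show 2*(m'+1) = (2*m'+1)+1 by omega]
      push_cast
      simp only [map_add, map_mul, map_one, map_ofNat, map_sub, map_zero, C_1, C_0, C_eq_natCast, Nat.cast_zero, Nat.cast_ofNat, mul_zero, zero_mul]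
      ring
    | succ K' =>
      have e : 2*(m'+1) - 1 = 2*m'+1 := by omega
      have e2 : 2*(K'+1) - 1 = 2*K'+1 := by omega
      rw [e, e2, show 2*(m'+1) = (2*m'+1)+1 by omega, show 2*(K'+1) = (2*K'+1)+1 by omega]
      push_cast
      simp only [map_add, map_mul, map_one, map_ofNat, map_sub, map_zero, C_1, C_0, C_eq_natCast, Nat.cast_zero, Nat.cast_ofNat, mul_zero, zero_mul]
      ring

lemma Pp_succ (m K : ℕ) : Pp (m+1) K = (1-X)^2 * Pp m K := by
  rw [Pp, Pp, show 2*(m+1) = 2 + 2*m by ring, pow_add, mul_assoc]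

lemma Ff_rec (m K : ℕ) : ((m:ℤ)+K+1) * Ff (m+1) K = -(4*m+2) * Ff m K := by
  rcases Nat.eq_zero_or_pos (m+K) with h0 | h1
  · have hm : m = 0 := by omega
    have hK : K = 0 := by omega
    subst hm; subst hK
    have e1 : Ff 0 0 = 1 := by
      simp [Ff, Pp, Polynomial.coeff_one]
    have e2 : Ff 1 0 = -2 := by
      have : Pp 1 0 = 1 - 2*X + X^2 := by
        rw [Pp]; ring
      rw [Ff, this]
      simp [coeff_one, coeff_X]
    rw [e1, e2]; ring
  · -- m + K ≥ 1
    have hpal : (Pp m K).coeff (m+K+1) = (Pp m K).coeff (m+K-1) := by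
      rw [pal m K (m+K+1) (by omega)]
      congr 1
      omega
    -- coefficient extraction of the ODE at index m+K
    have hode := congrArg (fun p => Polynomial.coeff p (m+K)) (ode m K)
    rw [sub_mul, one_mul, coeff_sub] at hode
    rw [coeff_derivative] at hode
    have hx2 : (X^2 * derivative (Pp m K)).coeff (m+K)
        = ((m+K-1 : ℕ) : ℤ) * (Pp m K).coeff (m+K-1) := by
      rw [mul_comm, Polynomial.coeff_mul_X_pow']
      rcases Nat.lt_or_ge (m+K) 2 with h2 | h2
      · rw [if_neg (by omega)]
        have : m + K = 1 := by omega
        rw [this]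
        simp
      · rw [if_pos (by omega), coeff_derivative]
        have e3 : m+K-2+1 = m+K-1 := by omega
        rw [e3]
        have e4 : ((m+K-2 : ℕ) : ℤ) + 1 = ((m+K-1 : ℕ) : ℤ) := by omega
        rw [e4, mul_comm]
    rw [hx2] at hode
    -- RHS of ode coefficient
    rw [sub_mul, coeff_sub, coeff_C_mul] at hode
    have hcx : (C ((2*m+2*K:ℕ):ℤ) * X * (Pp m K)).coeff (m+K)
        = ((2*m+2*K:ℕ):ℤ) * (Pp m K).coeff (m+K-1) := by
      rw [mul_assoc, coeff_C_mul]
      congr 1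
      rw [show m+K = (m+K-1)+1 by omega, coeff_X_mul]
      norm_num
    push_cast at hcx
    rw [hcx] at hode
    -- expansion of Ff (m+1) K
    have hstep : Ff (m+1) K = (Pp m K).coeff (m+K+1) - 2*(Pp m K).coeff (m+K)
        + (Pp m K).coeff (m+K-1) := by
      rw [Ff, Pp_succ]
      have hsq : ((1-X:ℤ[X]))^2 = 1 - 2*X + X^2 := by ring
      rw [hsq, add_mul, sub_mul, one_mul, coeff_add, coeff_sub]
      have c1 : (2*X*(Pp m K)).coeff (m+1+K) = 2 * (Pp m K).coeff (m+K) := by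
        rw [mul_assoc, show m+1+K = (m+K)+1 by omega]
        rw [show ((2:ℤ[X])) = C 2 by simp, coeff_C_mul, coeff_X_mul]
      have c2 : (X^2*(Pp m K)).coeff (m+1+K) = (Pp m K).coeff (m+K-1) := by
        rw [mul_comm, Polynomial.coeff_mul_X_pow', if_pos (by omega)]
        congr 1
        omega
      rw [c1, c2, show m+1+K = m+K+1 by omega]
    -- combine
    have hc1 : ((m+K-1 : ℕ) : ℤ) = (m:ℤ)+(K:ℤ)-1 := by omega
    have hc2 : ((m+K : ℕ) : ℤ) = (m:ℤ)+(K:ℤ) := by push_cast; ring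
    rw [hpal] at hode
    have hF : Ff m K = (Pp m K).coeff (m+K) := rfl
    rw [hstep, hpal, hF]
    push_cast at hode ⊢
    rw [hc1] at hode
    linarith [hode]

lemma Ff_pos (m K : ℕ) : 0 < (-1:ℤ)^m * Ff m K := by
  induction m with
  | zero =>
    have e : Ff 0 K = (Nat.choose (2*K) K : ℤ) := by
      rw [Ff, Pp, mul_zero, pow_zero, one_mul, zero_add, coeff_one_add_X_pow]
    rw [e, pow_zero, one_mul]
    exact_mod_cast Nat.choose_pos (by omega)
  | succ m ih =>
    have key := Ff_rec m K
    have h2 : ((m:ℤ)+K+1) * ((-1:ℤ)^(m+1) * Ff (m+1) K)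
        = (4*m+2) * ((-1:ℤ)^m * Ff m K) := by
      rw [pow_succ]
      linear_combination ((-1:ℤ)^m * (-1)) * key
    by_contra hy
    push_neg at hy
    have h3 : (0:ℤ) < (m:ℤ)+K+1 := by positivity
    have h4 : (0:ℤ) < (4*m+2) * ((-1:ℤ)^m * Ff m K) := by
      have : (0:ℤ) < (4*(m:ℤ)+2) := by positivity
      exact mul_pos this ih
    nlinarith [mul_nonneg (le_of_lt h3) (neg_nonneg.mpr hy)]

lemma coeff_Xpow_mul' (q : ℤ[X]) (v j : ℕ) (h : v ≤ j) : (X^v * q).coeff j = q.coeff (j - v) := by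
  rw [mul_comm, Polynomial.coeff_mul_X_pow', if_pos h]

lemma main_identity (s r : ℕ) (hs : 1 ≤ s) (hr : r ≤ s - 1) :
    ∑ v ∈ range (s+1), (-1 : ℤ)^v * (v:ℤ)^(2*r+1) * (Nat.choose (2*s) (s-v) : ℤ)
      = - ∑ k ∈ range (2*r+1), (gam (2*r+1) k : ℤ) * ((-1:ℤ)^k * Ff (r-k) (s-1-r)) := by
  obtain ⟨R, h⟩ := worp (2*r+1) (by omega) s
  have h2 := congrArg (fun p => p.comp (-X : ℤ[X])) h
  simp only [mul_comp, add_comp, sub_comp, one_comp, X_comp, pow_comp, C_comp,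
    Polynomial.sum_comp] at h2
  rw [show (1 : ℤ[X]) - -X = 1 + X by ring] at h2
  -- multiply by (1+X)^(2*(s-1-r))
  have h3 := congrArg (fun p => p * (1 + X : ℤ[X])^(2*(s-1-r))) h2
  rw [mul_assoc, ← pow_add] at h3
  have hexp : 2*r+1+1 + 2*(s-1-r) = 2*s := by omega
  rw [hexp] at h3
  -- take coefficient s
  have h4 := congrArg (fun p => Polynomial.coeff p s) h3
  -- LHS coefficient
  have hL : ((∑ v ∈ range (s+1), C ((v:ℤ)^(2*r+1)) * (-X)^v) * (1 + X)^(2*s)).coeff s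
      = ∑ v ∈ range (s+1), (-1 : ℤ)^v * (v:ℤ)^(2*r+1) * (Nat.choose (2*s) (s-v) : ℤ) := by
    rw [Finset.sum_mul, Polynomial.finset_sum_coeff]
    apply sum_congr rfl
    intro v hv
    have hv' : v ≤ s := by
      simp only [Finset.mem_range] at hv; omega
    have e1 : C ((v:ℤ)^(2*r+1)) * (-X)^v * (1+X)^(2*s)
        = C ((-1)^v * (v:ℤ)^(2*r+1)) * (X^v * (1+X)^(2*s)) := by
      rw [neg_pow, map_mul]
      have e2 : C ((-1 : ℤ)^v) = ((-1 : ℤ[X]))^v := by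
        rw [map_pow, map_neg, map_one]
      rw [e2]
      ring
    rw [e1, coeff_C_mul, coeff_Xpow_mul' _ v s hv', coeff_one_add_X_pow]
    try ring
  -- RHS coefficient
  have hR : (-X * (E (2*r+1)).comp (-X) * (1+X)^(2*(s-1-r))
      + (-X)^(s+1) * R.comp (-X) * (1+X)^(2*(s-1-r))).coeff s
      = - ∑ k ∈ range (2*r+1), (gam (2*r+1) k : ℤ) * ((-1:ℤ)^k * Ff (r-k) (s-1-r)) := by
    have hW : ((E (2*r+1)).comp (-X) * (1+X)^(2*(s-1-r))).coeff (s-1)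
        = ∑ k ∈ range (2*r+1), (gam (2*r+1) k : ℤ) * ((-1:ℤ)^k * Ff (r-k) (s-1-r)) := by
      rw [E_eq (2*r+1) (by omega)]
      simp only [Polynomial.sum_comp, mul_comp, pow_comp, C_comp, X_comp, add_comp, one_comp]
      rw [Finset.sum_mul, Polynomial.finset_sum_coeff]
      apply sum_congr rfl
      intro k hk
      by_cases hkr : k ≤ r
      · have e0 : (1 : ℤ[X]) + -X = 1 - X := by ring
        rw [e0]
        have e1 : C ((gam (2*r+1) k : ℤ)) * ((-X)^k * (1-X)^(2*r+1-1-2*k)) * (1+X)^(2*(s-1-r))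
            = C ((gam (2*r+1) k : ℤ) * (-1)^k) * (X^k * ((1-X)^(2*(r-k)) * (1+X)^(2*(s-1-r)))) := by
          rw [neg_pow, show 2*r+1-1-2*k = 2*(r-k) by omega, map_mul]
          have e2 : C ((-1 : ℤ)^k) = ((-1 : ℤ[X]))^k := by rw [map_pow, map_neg, map_one]
          rw [e2]; ring
        rw [e1, coeff_C_mul, coeff_Xpow_mul' _ k (s-1) (by omega)]
        have e3 : s-1-k = (r-k) + (s-1-r) := by omega
        rw [e3]
        have e4 : ((1-X:ℤ[X])^(2*(r-k)) * (1+X)^(2*(s-1-r))).coeff ((r-k)+(s-1-r))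
            = Ff (r-k) (s-1-r) := rfl
        rw [e4]
        ring
      · have hz : gam (2*r+1) k = 0 := gam_zero' _ _ (by omega)
        rw [hz]
        simp
    have hterm2 : ((-X)^(s+1) * R.comp (-X) * (1+X)^(2*(s-1-r))).coeff s = 0 := by
      rw [neg_pow]
      have e : ((-1:ℤ[X]))^(s+1) * X^(s+1) * R.comp (-X) * (1+X)^(2*(s-1-r))
          = (((-1:ℤ[X]))^(s+1) * (R.comp (-X) * (1+X)^(2*(s-1-r)))) * X^(s+1) := by ring
      rw [e, Polynomial.coeff_mul_X_pow', if_neg (by omega)]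
    have hterm1 : (-X * (E (2*r+1)).comp (-X) * (1+X)^(2*(s-1-r))).coeff s
        = - (((E (2*r+1)).comp (-X) * (1+X)^(2*(s-1-r))).coeff (s-1)) := by
      have e : -X * (E (2*r+1)).comp (-X) * (1+X)^(2*(s-1-r))
          = -(X^1 * ((E (2*r+1)).comp (-X) * (1+X)^(2*(s-1-r)))) := by ring
      rw [e, coeff_neg, coeff_Xpow_mul' _ 1 s (by omega)]
    rw [coeff_add, hterm1, hterm2, hW, add_zero]
  rw [add_mul, mul_assoc, mul_assoc] at h4
  rw [← hL, h4, ← hR]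
  ring_nf

theorem final (s r : ℕ) (hs : 1 ≤ s) (hr : r ≤ s - 1) :
    0 < (-1 : ℤ) ^ r *
      ∑ v ∈ Finset.Icc 1 s, (-1 : ℤ) ^ (v-1) * (Nat.choose (2*s) (s-v) : ℤ) * (v : ℤ) ^ (2*r+1) := by
  have hset : range (s+1) = insert 0 (Finset.Icc 1 s) := by
    ext x
    simp only [Finset.mem_range, Finset.mem_insert, Finset.mem_Icc]
    omega
  have h0 : ∑ v ∈ range (s+1), (-1 : ℤ)^v * (v:ℤ)^(2*r+1) * (Nat.choose (2*s) (s-v) : ℤ)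
      = - ∑ v ∈ Finset.Icc 1 s, (-1 : ℤ)^(v-1) * (Nat.choose (2*s) (s-v) : ℤ) * (v:ℤ)^(2*r+1) := by
    rw [hset, Finset.sum_insert (by simp)]
    have hz : ((-1:ℤ)^0 * ((0:ℕ):ℤ)^(2*r+1) * ((2*s).choose (s-0) : ℤ)) = 0 := by
      norm_num
    rw [hz, zero_add, ← Finset.sum_neg_distrib]
    apply sum_congr rfl
    intro v hv
    have hv1 : 1 ≤ v := (Finset.mem_Icc.mp hv).1
    obtain ⟨w, rfl⟩ : ∃ w, v = w + 1 := ⟨v-1, by omega⟩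
    rw [Nat.add_sub_cancel, pow_succ]
    ring
  have hmain := main_identity s r hs hr
  rw [h0] at hmain
  have hsum : ∑ v ∈ Finset.Icc 1 s, (-1 : ℤ)^(v-1) * (Nat.choose (2*s) (s-v) : ℤ) * (v:ℤ)^(2*r+1)
      = ∑ k ∈ range (2*r+1), (gam (2*r+1) k : ℤ) * ((-1:ℤ)^k * Ff (r-k) (s-1-r)) := by
    linarith [hmain]
  rw [hsum, Finset.mul_sum]
  apply Finset.sum_pos'
  · intro k hk
    by_cases hkr : k ≤ r
    · have e : (-1:ℤ)^r * ((gam (2*r+1) k : ℤ) * ((-1:ℤ)^k * Ff (r-k) (s-1-r)))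
          = (gam (2*r+1) k : ℤ) * ((-1:ℤ)^(r-k) * Ff (r-k) (s-1-r)) := by
        have e2 : (-1:ℤ)^r * (-1:ℤ)^k = (-1:ℤ)^(r-k) := by
          rw [← pow_add, show r+k = (r-k) + 2*k by omega, pow_add, pow_mul]
          norm_num
        calc (-1:ℤ)^r * ((gam (2*r+1) k : ℤ) * ((-1:ℤ)^k * Ff (r-k) (s-1-r)))
            = (gam (2*r+1) k : ℤ) * (((-1:ℤ)^r * (-1:ℤ)^k) * Ff (r-k) (s-1-r)) := by ring
          _ = _ := by rw [e2]
      rw [e]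
      exact mul_nonneg (by positivity) (le_of_lt (Ff_pos _ _))
    · have hz : gam (2*r+1) k = 0 := gam_zero' _ _ (by omega)
      rw [hz]
      simp
  · refine ⟨0, Finset.mem_range.mpr (by omega), ?_⟩
    rw [gam_nought _ (by omega)]
    have := Ff_pos r (s-1-r)
    simpa using this


end S17B

/-- With `c_r = ∑_{v=1}^{s} (-1)^{v-1} binom(2s, s-v) v^{2r+1}`, one has `sgn(c_r) = (-1)^r`. -/
theorem stmt17 (s r : ℕ) (hs : 1 ≤ s) (hr : r ≤ s - 1) :
    0 < (-1 : ℤ) ^ r *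
      ∑ v ∈ Finset.Icc 1 s, (-1 : ℤ) ^ (v-1) * (Nat.choose (2*s) (s-v) : ℤ) * (v : ℤ) ^ (2*r+1) :=
  S17B.final s r hs hr
end
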